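/- arXiv:2201.03524 — 6 statements merged into one kernel-verified Lean document; each statement's English description precedes it below -/
import Mathlib

section
/- Let B ⊆ ℝⁿ be a ball and let M be a measurable map from ℝⁿ to the real symmetric positive-definite n×n matrices whose logarithm log M is integrable on B, and set ω(x) := ‖M(x)‖ (spectral norm). Then ⨍_B |log ω(x) − ⟨log ω⟩_B| dx ≤ 2 ⨍_B ‖log M(x) − ⟨log M⟩_B‖ dx. Consequently |log ω|_{BMO(B)} ≤ 2 |log M|_{BMO(B)}. -/
open MeasureTheory Metric
open scoped Matrix

/-- The spectral (operator) norm of a real `n × n` matrix, i.e. its operator norm as a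
linear map on Euclidean space. -/
noncomputable def specNorm {n : ℕ} (A : Matrix (Fin n) (Fin n) ℝ) : ℝ :=
  ‖LinearMap.toContinuousLinearMap (Matrix.toEuclideanLin A)‖

/-- The (entrywise) average `⟨L⟩_s` of a matrix-valued function over a set `s`. -/
noncomputable def matAvg {d n : ℕ} (s : Set (EuclideanSpace ℝ (Fin d)))
    (L : EuclideanSpace ℝ (Fin d) → Matrix (Fin n) (Fin n) ℝ) : Matrix (Fin n) (Fin n) ℝ :=
  Matrix.of fun i j => ⨍ x in s, L x i j

set_option linter.unusedSectionVars false
set_option maxHeartbeats 1000000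

section Norms
open scoped Matrix.Norms.L2Operator

variable {n : ℕ}

lemma specNorm_eq (A : Matrix (Fin n) (Fin n) ℝ) : specNorm A = ‖A‖ := rfl

lemma specNorm_nonneg (A : Matrix (Fin n) (Fin n) ℝ) : 0 ≤ specNorm A := by
  rw [specNorm_eq]; positivity

lemma specNorm_sub_rev (A B : Matrix (Fin n) (Fin n) ℝ) :
    specNorm (A - B) = specNorm (B - A) := by
  rw [specNorm_eq, specNorm_eq]; exact norm_sub_rev A B

lemma specNorm_le_of_bound {A : Matrix (Fin n) (Fin n) ℝ} {c : ℝ} (hc : 0 ≤ c)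
    (h : ∀ x : EuclideanSpace ℝ (Fin n),
      ‖(EuclideanSpace.equiv (Fin n) ℝ).symm (A *ᵥ (WithLp.equiv 2 _ x))‖ ≤ c * ‖x‖) :
    specNorm A ≤ c := by
  refine ContinuousLinearMap.opNorm_le_bound _ hc fun x => ?_
  simpa [Matrix.toEuclideanLin_apply] using h x

lemma mulVec_le_specNorm (A : Matrix (Fin n) (Fin n) ℝ) (x : EuclideanSpace ℝ (Fin n)) :
    ‖(EuclideanSpace.equiv (Fin n) ℝ).symm (A *ᵥ (WithLp.equiv 2 _ x))‖ ≤ specNorm A * ‖x‖ := by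
  rw [specNorm_eq]
  exact Matrix.l2_opNorm_mulVec A x

lemma euclidean_coord_le_norm (x : EuclideanSpace ℝ (Fin n)) (j : Fin n) :
    |x j| ≤ ‖x‖ := by
  rw [EuclideanSpace.norm_eq]
  have h1 : |x j| = Real.sqrt (‖x j‖ ^ 2) := by
    rw [Real.sqrt_sq_eq_abs, Real.norm_eq_abs, abs_abs]
  rw [h1]
  refine Real.sqrt_le_sqrt ?_
  exact Finset.single_le_sum (f := fun i => ‖x i‖ ^ 2) (fun i _ => sq_nonneg _)
    (Finset.mem_univ j)

lemma specNorm_le_sum (A : Matrix (Fin n) (Fin n) ℝ) :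
    specNorm A ≤ ∑ i, ∑ j, |A i j| := by
  have hstd : ∀ (i j : Fin n), specNorm (Matrix.single i j (1:ℝ)) ≤ 1 := by
    intro i j
    refine specNorm_le_of_bound zero_le_one fun x => ?_
    have hmv : Matrix.single i j (1:ℝ) *ᵥ (WithLp.equiv 2 _ x) = Pi.single i (x j) := by
      ext k
      simp only [Matrix.mulVec, Matrix.single, dotProduct, Matrix.of_apply,
        Pi.single_apply]
      by_cases h : k = i
      · subst h
        simp
      · simp [h, Ne.symm h]
    rw [hmv]
    have h2 : (EuclideanSpace.equiv (Fin n) ℝ).symm (Pi.single i (x j))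
        = EuclideanSpace.single i (x j) := rfl
    rw [h2, EuclideanSpace.norm_single, one_mul, Real.norm_eq_abs]
    exact euclidean_coord_le_norm x j
  conv_lhs => rw [Matrix.matrix_eq_sum_single A]
  rw [specNorm_eq]
  refine (norm_sum_le _ _).trans ?_
  refine Finset.sum_le_sum fun i _ => ?_
  refine (norm_sum_le _ _).trans ?_
  refine Finset.sum_le_sum fun j _ => ?_
  have h3 : Matrix.single i j (A i j) = (A i j) • Matrix.single i j (1:ℝ) := by
    rw [Matrix.smul_single, smul_eq_mul, mul_one]
  rw [h3, norm_smul, Real.norm_eq_abs]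
  calc |A i j| * ‖Matrix.single i j (1:ℝ)‖
      ≤ |A i j| * 1 := by
        refine mul_le_mul_of_nonneg_left ?_ (abs_nonneg _)
        rw [← specNorm_eq]
        exact hstd i j
    _ = |A i j| := mul_one _

variable [NeZero n] {A B : Matrix (Fin n) (Fin n) ℝ}

lemma specNorm_diagonal (d : Fin n → ℝ) :
    specNorm (Matrix.diagonal d) = ⨆ i, |d i| := by
  refine le_antisymm ?_ ?_
  · refine specNorm_le_of_bound (le_ciSup_of_le (Set.finite_range _).bddAbove
      (Classical.arbitrary (Fin n)) (abs_nonneg _)) fun x => ?_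
    set c := ⨆ i, |d i| with hc
    have hc0 : 0 ≤ c := le_ciSup_of_le (Set.finite_range _).bddAbove
      (Classical.arbitrary (Fin n)) (abs_nonneg _)
    have hnorm : ∀ y : EuclideanSpace ℝ (Fin n), ‖y‖ = Real.sqrt (∑ i, (y i)^2) := by
      intro y
      rw [EuclideanSpace.norm_eq]
      congr 1
      refine Finset.sum_congr rfl fun i _ => ?_
      rw [Real.norm_eq_abs, sq_abs]
    rw [hnorm, hnorm]
    have h1 : ∀ i, (((EuclideanSpace.equiv (Fin n) ℝ).symm
        (Matrix.diagonal d *ᵥ (WithLp.equiv 2 _ x))) i)^2 = (d i * x i)^2 := by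
      intro i
      simp [Matrix.mulVec_diagonal]
    rw [Finset.sum_congr rfl fun i _ => h1 i]
    have h2 : ∑ i, (d i * x i)^2 ≤ c^2 * ∑ i, (x i)^2 := by
      rw [Finset.mul_sum]
      refine Finset.sum_le_sum fun i _ => ?_
      rw [mul_pow]
      have : (d i)^2 ≤ c^2 := by
        rw [← sq_abs]
        refine pow_le_pow_left₀ (abs_nonneg _) ?_ 2
        exact le_ciSup (f := fun i => |d i|) (Set.finite_range _).bddAbove i
      exact mul_le_mul_of_nonneg_right this (sq_nonneg _)
    calc Real.sqrt (∑ i, (d i * x i)^2) ≤ Real.sqrt (c^2 * ∑ i, (x i)^2) :=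
          Real.sqrt_le_sqrt h2
      _ = c * Real.sqrt (∑ i, (x i)^2) := by
          rw [Real.sqrt_mul (sq_nonneg c), Real.sqrt_sq hc0]
  · refine ciSup_le fun j => ?_
    have := mulVec_le_specNorm (Matrix.diagonal d) (EuclideanSpace.single j 1)
    have hs : (WithLp.equiv 2 (Fin n → ℝ)) (EuclideanSpace.single j (1:ℝ)) = Pi.single j 1 :=
      rfl
    rw [hs, Matrix.diagonal_mulVec_single, mul_one] at this
    have h2 : (EuclideanSpace.equiv (Fin n) ℝ).symm (Pi.single j (d j))
        = EuclideanSpace.single j (d j) := rfl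
    rw [h2, EuclideanSpace.norm_single, EuclideanSpace.norm_single] at this
    simpa using this

lemma rayleigh_le (hA : A.IsHermitian) (x : Fin n → ℝ) :
    x ⬝ᵥ (A *ᵥ x) ≤ (⨆ i, hA.eigenvalues i) * (x ⬝ᵥ x) := by
  set μ := ⨆ i, hA.eigenvalues i with hμ
  have hle : ∀ i, hA.eigenvalues i ≤ μ :=
    fun i => le_ciSup (f := hA.eigenvalues) (Set.finite_range _).bddAbove i
  have hC : (Matrix.diagonal (fun i => μ - hA.eigenvalues i)).PosSemidef :=
    Matrix.posSemidef_diagonal_iff.mpr fun i => sub_nonneg.mpr (hle i)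
  have hC2 := hC.mul_mul_conjTranspose_same
    (hA.eigenvectorUnitary : Matrix (Fin n) (Fin n) ℝ)
  have hU1 : (hA.eigenvectorUnitary : Matrix (Fin n) (Fin n) ℝ) *
      star (hA.eigenvectorUnitary : Matrix (Fin n) (Fin n) ℝ) = 1 :=
    Matrix.mem_unitaryGroup_iff.mp hA.eigenvectorUnitary.2
  have hdecomp : (hA.eigenvectorUnitary : Matrix (Fin n) (Fin n) ℝ) *
      Matrix.diagonal (fun i => μ - hA.eigenvalues i) *
      ((hA.eigenvectorUnitary : Matrix (Fin n) (Fin n) ℝ))ᴴ = μ • 1 - A := by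
    have hd : Matrix.diagonal (fun i => μ - hA.eigenvalues i)
        = Matrix.diagonal (fun _ => μ) - Matrix.diagonal hA.eigenvalues := by
      rw [← Matrix.diagonal_sub]
    rw [hd, Matrix.mul_sub, Matrix.sub_mul]
    congr 1
    · have h5 : Matrix.diagonal (fun _ : Fin n => μ) = μ • (1 : Matrix (Fin n) (Fin n) ℝ) := by
        ext i j
        by_cases h : i = j <;> simp [Matrix.diagonal_apply, Matrix.one_apply, h]
      rw [h5, Matrix.mul_smul, Matrix.smul_mul, Matrix.mul_one,
        ← Matrix.star_eq_conjTranspose, hU1]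
    · conv_rhs => rw [hA.spectral_theorem]
      rw [← Matrix.star_eq_conjTranspose]
      congr 2
  rw [hdecomp] at hC2
  have h0 := hC2.dotProduct_mulVec_nonneg x
  simp only [star_trivial] at h0
  rw [Matrix.sub_mulVec, Matrix.smul_mulVec, Matrix.one_mulVec, dotProduct_sub,
    dotProduct_smul] at h0
  simp only [smul_eq_mul] at h0
  linarith

lemma exists_eigenvalues_max (hA : A.IsHermitian) :
    ∃ i₀, (⨆ i, hA.eigenvalues i) = hA.eigenvalues i₀ ∧
      ∀ j, hA.eigenvalues j ≤ hA.eigenvalues i₀ := by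
  obtain ⟨i₀, h⟩ := Finite.exists_max hA.eigenvalues
  exact ⟨i₀, le_antisymm (ciSup_le h)
    (le_ciSup (f := hA.eigenvalues) (Set.finite_range _).bddAbove i₀), h⟩

lemma lamMax_le (hA : A.IsHermitian) (hB : B.IsHermitian) :
    (⨆ i, hA.eigenvalues i) ≤ (⨆ i, hB.eigenvalues i) + specNorm (A - B) := by
  obtain ⟨i₀, hsup, -⟩ := exists_eigenvalues_max hA
  set v : EuclideanSpace ℝ (Fin n) := hA.eigenvectorBasis i₀ with hv
  have hvnorm : ‖v‖ = 1 := hA.eigenvectorBasis.orthonormal.1 i₀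
  have hww : (⇑v) ⬝ᵥ (⇑v) = 1 := by
    have h1 : (⇑v) ⬝ᵥ (⇑v) = (inner ℝ v v : ℝ) := by
      rw [PiLp.inner_apply]
      simp [dotProduct, sq]
    rw [h1, real_inner_self_eq_norm_sq, hvnorm]
    norm_num
  have h1 : hA.eigenvalues i₀ = (⇑v) ⬝ᵥ (A *ᵥ ⇑v) := by
    simpa using hA.eigenvalues_eq i₀
  have hsplit : (⇑v) ⬝ᵥ (A *ᵥ ⇑v)
      = (⇑v) ⬝ᵥ (B *ᵥ ⇑v) + (⇑v) ⬝ᵥ ((A - B) *ᵥ ⇑v) := by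
    rw [Matrix.sub_mulVec, dotProduct_sub]
    ring
  have hb1 : (⇑v) ⬝ᵥ (B *ᵥ ⇑v) ≤ ⨆ i, hB.eigenvalues i := by
    have := rayleigh_le hB (⇑v)
    rwa [hww, mul_one] at this
  have hb2 : (⇑v) ⬝ᵥ ((A - B) *ᵥ ⇑v) ≤ specNorm (A - B) := by
    set y : EuclideanSpace ℝ (Fin n) :=
      (EuclideanSpace.equiv (Fin n) ℝ).symm ((A - B) *ᵥ ⇑v) with hy
    have h2 : (⇑v) ⬝ᵥ ((A - B) *ᵥ ⇑v) = (inner ℝ y v : ℝ) := by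
      rw [PiLp.inner_apply]
      simp [dotProduct, hy, mul_comm]
    have h3 : ‖y‖ ≤ specNorm (A - B) * ‖v‖ := by
      have := mulVec_le_specNorm (A - B) v
      simpa [hy] using this
    calc (⇑v) ⬝ᵥ ((A - B) *ᵥ ⇑v) = (inner ℝ y v : ℝ) := h2
      _ ≤ ‖y‖ * ‖v‖ := real_inner_le_norm y v
      _ ≤ specNorm (A - B) * ‖v‖ * ‖v‖ :=
          mul_le_mul_of_nonneg_right h3 (norm_nonneg v)
      _ = specNorm (A - B) := by rw [hvnorm]; ring
  rw [hsup, h1, hsplit]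
  exact add_le_add hb1 hb2

lemma exp_eigen (hA : A.IsHermitian) :
    NormedSpace.exp A = (hA.eigenvectorUnitary : Matrix (Fin n) (Fin n) ℝ) *
      Matrix.diagonal (fun i => Real.exp (hA.eigenvalues i)) *
      star (hA.eigenvectorUnitary : Matrix (Fin n) (Fin n) ℝ) := by
  set U : Matrix (Fin n) (Fin n) ℝ := (hA.eigenvectorUnitary : Matrix (Fin n) (Fin n) ℝ) with hU
  have hU2 : star U * U = 1 := Matrix.mem_unitaryGroup_iff'.mp hA.eigenvectorUnitary.2
  have hU1 : U * star U = 1 := Matrix.mem_unitaryGroup_iff.mp hA.eigenvectorUnitary.2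
  have hUinv : U⁻¹ = star U := Matrix.inv_eq_left_inv hU2
  have hsp : A = U * Matrix.diagonal hA.eigenvalues * U⁻¹ := by
    rw [hUinv]
    conv_lhs => rw [hA.spectral_theorem]
    congr 2
  have h := congrArg (NormedSpace.exp) hsp
  rw [Matrix.exp_conj _ _ ⟨⟨U, star U, hU1, hU2⟩, rfl⟩, hUinv,
    Matrix.exp_diagonal] at h
  have hfun : NormedSpace.exp hA.eigenvalues = fun i => Real.exp (hA.eigenvalues i) := by
    rw [Pi.exp_def]
    funext i
    rw [Real.exp_eq_exp_ℝ]
  rw [h, hfun]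

lemma specNorm_exp (hA : A.IsHermitian) :
    specNorm (NormedSpace.exp A) = Real.exp (⨆ i, hA.eigenvalues i) := by
  rw [exp_eigen hA, specNorm_eq]
  rw [mul_assoc, CStarRing.norm_mem_unitary_mul _ hA.eigenvectorUnitary.2,
    CStarRing.norm_mul_mem_unitary _ (Unitary.star_mem hA.eigenvectorUnitary.2),
    ← specNorm_eq, specNorm_diagonal]
  obtain ⟨i₀, hsup, hmax⟩ := exists_eigenvalues_max hA
  rw [hsup]
  refine le_antisymm (ciSup_le fun j => ?_) ?_
  · rw [abs_of_pos (Real.exp_pos _)]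
    exact Real.exp_le_exp.mpr (hmax j)
  · refine le_trans ?_ (le_ciSup (f := fun i => |Real.exp (hA.eigenvalues i)|)
      (Set.finite_range _).bddAbove i₀)
    rw [abs_of_pos (Real.exp_pos _)]

end Norms

section Key

lemma isHermitian_of_isSymm {n : ℕ} {A : Matrix (Fin n) (Fin n) ℝ} (h : A.IsSymm) :
    A.IsHermitian := by
  ext i j
  rw [Matrix.conjTranspose_apply, star_trivial]
  exact congrFun (congrFun h i) j

lemma specNorm_zero_dim (A : Matrix (Fin 0) (Fin 0) ℝ) : specNorm A = 0 := by
  rw [specNorm]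
  refine le_antisymm ?_ (norm_nonneg _)
  refine ContinuousLinearMap.opNorm_le_bound _ le_rfl fun x => ?_
  have : (LinearMap.toContinuousLinearMap (Matrix.toEuclideanLin A)) x = 0 :=
    Subsingleton.elim _ _
  rw [this, norm_zero, zero_mul]

lemma key_lipschitz {n : ℕ} {A B : Matrix (Fin n) (Fin n) ℝ} (hA : A.IsSymm) (hB : B.IsSymm) :
    |Real.log (specNorm (NormedSpace.exp A)) - Real.log (specNorm (NormedSpace.exp B))|
      ≤ specNorm (A - B) := by
  rcases Nat.eq_zero_or_pos n with h0 | hpos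
  · subst h0
    rw [specNorm_zero_dim, specNorm_zero_dim, sub_self, abs_zero]
    exact specNorm_nonneg _
  · haveI : NeZero n := ⟨hpos.ne'⟩
    have hA' := isHermitian_of_isSymm hA
    have hB' := isHermitian_of_isSymm hB
    rw [specNorm_exp hA', specNorm_exp hB', Real.log_exp, Real.log_exp, abs_sub_le_iff]
    constructor
    · have := lamMax_le hA' hB'
      linarith
    · have := lamMax_le hB' hA'
      rw [specNorm_sub_rev] at this
      linarith

lemma specNorm_continuous {n : ℕ} :
    Continuous (specNorm : Matrix (Fin n) (Fin n) ℝ → ℝ) := by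
  have h : Continuous fun A : Matrix (Fin n) (Fin n) ℝ =>
      LinearMap.toContinuousLinearMap (Matrix.toEuclideanLin A) :=
    by
      have := LinearMap.continuous_of_finiteDimensional
        ((Matrix.toEuclideanLin.trans LinearMap.toContinuousLinearMap :
          Matrix (Fin n) (Fin n) ℝ ≃ₗ[ℝ] (EuclideanSpace ℝ (Fin n) →L[ℝ] EuclideanSpace ℝ (Fin n))) :
          Matrix (Fin n) (Fin n) ℝ →ₗ[ℝ] (EuclideanSpace ℝ (Fin n) →L[ℝ] EuclideanSpace ℝ (Fin n)))
      exact this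
  exact continuous_norm.comp h

end Key

/-- Auxiliary measurable-space instance on matrices (the product σ-algebra). -/
def Matrix.instMeasurableSpaceAux {n : ℕ} : MeasurableSpace (Matrix (Fin n) (Fin n) ℝ) :=
  inferInstanceAs (MeasurableSpace (Fin n → Fin n → ℝ))

/-- Auxiliary Borel-space fact for matrices. -/
def Matrix.instBorelSpaceAux {n : ℕ} :
    @BorelSpace (Matrix (Fin n) (Fin n) ℝ) _ Matrix.instMeasurableSpaceAux :=
  inferInstanceAs (BorelSpace (Fin n → Fin n → ℝ))

section Meas
open scoped Matrix

attribute [local instance] Matrix.instMeasurableSpaceAux Matrix.instBorelSpaceAux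

lemma average_estimate {n : ℕ}
    (M L : EuclideanSpace ℝ (Fin n) → Matrix (Fin n) (Fin n) ℝ)
    (hMmeas : ∀ i j, Measurable fun x => M x i j)
    (hsymm : ∀ x, (L x).IsSymm)
    (hexp : ∀ x, NormedSpace.exp (L x) = M x)
    (s : Set (EuclideanSpace ℝ (Fin n)))
    (h0 : volume s ≠ 0) (htop : volume s ≠ ⊤)
    (hint : ∀ i j, IntegrableOn (fun x => L x i j) s) :
    (⨍ x in s, |Real.log (specNorm (M x)) - ⨍ y in s, Real.log (specNorm (M y))|)
      ≤ 2 * ⨍ x in s, specNorm (L x - matAvg s L) := by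
  set g : EuclideanSpace ℝ (Fin n) → ℝ := fun x => Real.log (specNorm (M x)) with hgdef
  set Avg : Matrix (Fin n) (Fin n) ℝ := matAvg s L with hAvg
  set h : EuclideanSpace ℝ (Fin n) → ℝ := fun x => specNorm (L x - Avg) with hhdef
  set c : ℝ := Real.log (specNorm (NormedSpace.exp Avg)) with hcdef
  have hAvgSymm : Avg.IsSymm := by
    ext i j
    rw [Matrix.transpose_apply]
    show (⨍ x in s, L x j i) = ⨍ x in s, L x i j
    congr 1
    funext x
    exact congrFun (congrFun (hsymm x) i) j
  have hpt : ∀ x, |g x - c| ≤ h x := by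
    intro x
    have := key_lipschitz (hsymm x) hAvgSymm
    rwa [hexp x] at this
  have hgm : Measurable g := by
    have hM : Measurable (fun x => M x) :=
      measurable_pi_lambda _ fun i => measurable_pi_lambda _ fun j => hMmeas i j
    exact Real.measurable_log.comp (specNorm_continuous.measurable.comp hM)
  set m : ℝ := volume.real s with hmdef
  have hm : 0 < m := ENNReal.toReal_pos h0 htop
  have hint2 : ∀ i j, IntegrableOn (fun x => L x i j - Avg i j) s := fun i j =>
    (hint i j).sub (integrableOn_const htop)
  have haem : ∀ i j, AEMeasurable (fun x => L x i j - Avg i j) (volume.restrict s) :=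
    fun i j => (hint2 i j).aemeasurable
  set G : EuclideanSpace ℝ (Fin n) → Matrix (Fin n) (Fin n) ℝ :=
    fun x => Matrix.of fun i j => (haem i j).mk _ x with hGdef
  have hGm : Measurable G :=
    measurable_pi_lambda _ fun i => measurable_pi_lambda _ fun j => (haem i j).measurable_mk
  have hGae : ∀ᵐ x ∂(volume.restrict s), (fun i j => L x i j - Avg i j) = G x := by
    have hall : ∀ᵐ x ∂(volume.restrict s), ∀ i j, L x i j - Avg i j = G x i j := by
      rw [MeasureTheory.ae_all_iff]
      intro i
      rw [MeasureTheory.ae_all_iff]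
      intro j
      exact (haem i j).ae_eq_mk
    filter_upwards [hall] with x hx
    funext i j
    exact hx i j
  have hhm : AEStronglyMeasurable h (volume.restrict s) := by
    refine ⟨fun x => specNorm (G x),
      (specNorm_continuous.measurable.comp hGm).stronglyMeasurable, ?_⟩
    filter_upwards [hGae] with x hx
    have hsub : L x - Avg = G x := by
      funext i j
      exact congrFun (congrFun hx i) j
    show specNorm (L x - Avg) = specNorm (G x)
    rw [hsub]
  have hdom : IntegrableOn (fun x => ∑ i, ∑ j, |L x i j - Avg i j|) s :=
    integrable_finset_sum _ fun i _ => integrable_finset_sum _ fun j _ => (hint2 i j).abs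
  have hh_int : IntegrableOn h s := by
    refine Integrable.mono' hdom hhm (Filter.Eventually.of_forall fun x => ?_)
    rw [Real.norm_eq_abs, abs_of_nonneg (specNorm_nonneg _)]
    exact specNorm_le_sum _
  have hgc_int : IntegrableOn (fun x => g x - c) s := by
    refine Integrable.mono' hh_int
      ((hgm.aestronglyMeasurable.restrict).sub aestronglyMeasurable_const)
      (Filter.Eventually.of_forall fun x => ?_)
    rw [Real.norm_eq_abs]
    exact hpt x
  have hg_int : IntegrableOn g s := by
    have h4 : g = fun x => (g x - c) + c := by funext x; ring
    rw [h4]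
    exact hgc_int.add (integrableOn_const htop)
  set a : ℝ := ⨍ y in s, g y with hadef
  have hIg : ∫ x in s, g x = m * a := by
    rw [hadef, setAverage_eq, smul_eq_mul, ← mul_assoc, mul_inv_cancel₀ hm.ne', one_mul]
  have h1 : ∫ x in s, |g x - c| ≤ ∫ x in s, h x :=
    integral_mono hgc_int.abs hh_int fun x => hpt x
  have h2 : m * |c - a| ≤ ∫ x in s, h x := by
    have hconst : ∫ x in s, (c - g x) = m * c - m * a := by
      rw [integral_sub (integrableOn_const htop (C := c)) hg_int,
        setIntegral_const, smul_eq_mul, hIg]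
    have habs : m * |c - a| = |∫ x in s, (c - g x)| := by
      rw [hconst, ← mul_sub, abs_mul, abs_of_pos hm]
    rw [habs]
    calc |∫ x in s, (c - g x)| ≤ ∫ x in s, |c - g x| := by
          simpa [Real.norm_eq_abs] using
            norm_integral_le_integral_norm (μ := volume.restrict s) (fun x => c - g x)
      _ = ∫ x in s, |g x - c| := by
          congr 1
          funext x
          rw [abs_sub_comm]
      _ ≤ ∫ x in s, h x := h1
  have h3 : ∫ x in s, |g x - a| ≤ 2 * ∫ x in s, h x := by
    have hptr : ∀ x, |g x - a| ≤ |g x - c| + |c - a| := fun x => by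
      calc |g x - a| = |(g x - c) + (c - a)| := by ring_nf
        _ ≤ |g x - c| + |c - a| := abs_add_le _ _
    have hrhs_int : IntegrableOn (fun x => |g x - c| + |c - a|) s :=
      hgc_int.abs.add (integrableOn_const htop)
    calc ∫ x in s, |g x - a| ≤ ∫ x in s, (|g x - c| + |c - a|) :=
          integral_mono (hg_int.sub (integrableOn_const htop (C := a))).abs
            hrhs_int hptr
      _ = (∫ x in s, |g x - c|) + m * |c - a| := by
          rw [integral_add hgc_int.abs (integrableOn_const htop (C := |c - a|)),
            setIntegral_const, smul_eq_mul]
      _ ≤ (∫ x in s, h x) + (∫ x in s, h x) := add_le_add h1 h2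
      _ = 2 * ∫ x in s, h x := by ring
  rw [setAverage_eq, setAverage_eq, smul_eq_mul, smul_eq_mul, ← hmdef]
  calc m⁻¹ * ∫ x in s, |g x - a| ≤ m⁻¹ * (2 * ∫ x in s, h x) :=
        mul_le_mul_of_nonneg_left h3 (inv_nonneg.mpr hm.le)
    _ = 2 * (m⁻¹ * ∫ x in s, h x) := by ring

end Meas

/-- Let `B ⊆ ℝⁿ` be a ball and `M` a measurable map into the real symmetric
positive-definite `n × n` matrices, with (matrix) logarithm `L` (i.e. `exp (L x) = M x`, `L x`
symmetric) integrable on `B`; set `ω x := ‖M x‖` (spectral norm).  Then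
`⨍_B |log ω - ⟨log ω⟩_B| ≤ 2 ⨍_B ‖L - ⟨L⟩_B‖`, and consequently the same estimate holds on
every ball `B' ⊆ B`, whence `|log ω|_{BMO(B)} ≤ 2 |log M|_{BMO(B)}`. -/
theorem stmt3 (n : ℕ) (x₀ : EuclideanSpace ℝ (Fin n)) (R : ℝ) (hR : 0 < R)
    (M L : EuclideanSpace ℝ (Fin n) → Matrix (Fin n) (Fin n) ℝ)
    (hMmeas : ∀ i j, Measurable fun x => M x i j)
    (hpos : ∀ x, (M x).PosDef)
    (hsymm : ∀ x, (L x).IsSymm)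
    (hexp : ∀ x, NormedSpace.exp (L x) = M x)
    (hint : ∀ i j, IntegrableOn (fun x => L x i j) (ball x₀ R)) :
    (⨍ x in ball x₀ R,
        |Real.log (specNorm (M x)) - ⨍ y in ball x₀ R, Real.log (specNorm (M y))|) ≤
      2 * ⨍ x in ball x₀ R, specNorm (L x - matAvg (ball x₀ R) L) ∧
    ∀ (c : EuclideanSpace ℝ (Fin n)) (r : ℝ), 0 < r → ball c r ⊆ ball x₀ R →
      (⨍ x in ball c r,
          |Real.log (specNorm (M x)) - ⨍ y in ball c r, Real.log (specNorm (M y))|) ≤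
        2 * ⨍ x in ball c r, specNorm (L x - matAvg (ball c r) L) := by
  constructor
  · exact average_estimate M L hMmeas hsymm hexp (ball x₀ R)
      (measure_ball_pos volume x₀ hR).ne' measure_ball_lt_top.ne hint
  · intro c r hr hsub
    exact average_estimate M L hMmeas hsymm hexp (ball c r)
      (measure_ball_pos volume c hr).ne' measure_ball_lt_top.ne
      (fun i j => (hint i j).mono_set hsub)
end

section
/- Let n ≥ 2, δ ∈ [0, 1/(2n)], R > 0, and let Ω ⊆ ℝⁿ be a bounded open set which is (δ, 4R)-Lipschitz. Then for every y ∈ Ω and every radius 0 < r ≤ 4R, one has |Ω ∩ B_r(y)| ≥ 4^{−n} |B_r(y)|, where B_r(y) is the open ball of radius r centered at y and |·| denotes Lebesgue measure. -/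
open MeasureTheory Metric
open scoped ENNReal

/-- A bounded open set `Ω ⊆ ℝⁿ` (here `n = m + 1`) is `(δ, R)`-Lipschitz if near every
boundary point, after a rigid motion taking the boundary point to the origin, `Ω` agrees in
`B_R(0)` with the region above the graph of a `δ`-Lipschitz function `ψ : ℝ^{n-1} → ℝ`. -/
def IsDeltaRLipschitz (m : ℕ) (δ R : ℝ) (Ω : Set (EuclideanSpace ℝ (Fin (m + 1)))) : Prop :=
  ∀ x₀ ∈ frontier Ω,
    ∃ (O : EuclideanSpace ℝ (Fin (m + 1)) ≃ₗᵢ[ℝ] EuclideanSpace ℝ (Fin (m + 1)))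
      (ψ : EuclideanSpace ℝ (Fin m) → ℝ),
      LipschitzWith (Real.toNNReal δ) ψ ∧
      (fun x => O (x - x₀)) '' Ω ∩ ball 0 R =
        {x ∈ ball (0 : EuclideanSpace ℝ (Fin (m + 1))) R |
          ψ (WithLp.toLp 2 (fun i : Fin m => x (Fin.castSucc i))) < x (Fin.last m)}

/-- A preconnected set meeting an open set and its complement meets the frontier. -/
lemma aux_pre_frontier {E : Type*} [TopologicalSpace E] {s Ω : Set E} {y z : E}
    (hs : IsPreconnected s) (hys : y ∈ s) (hzs : z ∈ s) (hy : y ∈ Ω) (hΩ : IsOpen Ω)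
    (hz : z ∉ Ω) : (s ∩ frontier Ω).Nonempty := by
  by_contra h
  rw [Set.not_nonempty_iff_eq_empty] at h
  have hnf : ∀ x ∈ s, x ∉ frontier Ω := fun x hx hf =>
    (Set.eq_empty_iff_forall_notMem.1 h x) ⟨hx, hf⟩
  have hz' : z ∈ interior Ωᶜ := by
    rw [interior_compl, Set.mem_compl_iff]
    intro hc
    exact hnf z hzs ⟨hc, fun hi => hz (interior_subset hi)⟩
  have hcover : s ⊆ interior Ω ∪ interior Ωᶜ := by
    intro x hx
    by_cases hc : x ∈ closure Ω
    · exact Or.inl (by_contra fun hi => hnf x hx ⟨hc, hi⟩)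
    · exact Or.inr (by rwa [interior_compl, Set.mem_compl_iff])
  obtain ⟨x, -, hx1, hx2⟩ := hs (interior Ω) (interior Ωᶜ) isOpen_interior isOpen_interior
    hcover ⟨y, hys, by rwa [hΩ.interior_eq]⟩ ⟨z, hzs, hz'⟩
  exact (interior_subset hx2) (interior_subset hx1)

/-- The last coordinate and the "tail" are bounded by the norm. -/
lemma aux_coord (m : ℕ) (v : EuclideanSpace ℝ (Fin (m + 1))) (v' : EuclideanSpace ℝ (Fin m))
    (hv' : ∀ i, v' i = v (Fin.castSucc i)) :
    |v (Fin.last m)| ≤ ‖v‖ ∧ ‖v'‖ ≤ ‖v‖ := by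
  have hnn : (0:ℝ) ≤ ∑ i, ‖v i‖ ^ 2 := Finset.sum_nonneg fun i _ => sq_nonneg _
  have h1 : (0:ℝ) ≤ ∑ i, ‖v' i‖ ^ 2 := Finset.sum_nonneg fun i _ => sq_nonneg _
  have hsq : ‖v‖ ^ 2 = ∑ i, ‖v i‖ ^ 2 := by
    rw [EuclideanSpace.norm_eq, Real.sq_sqrt hnn]
  have htsq : ‖v'‖ ^ 2 = ∑ i, ‖v' i‖ ^ 2 := by
    rw [EuclideanSpace.norm_eq, Real.sq_sqrt h1]
  have hsum : ∑ i, ‖v i‖ ^ 2 = (∑ i, ‖v' i‖ ^ 2) + ‖v (Fin.last m)‖ ^ 2 := by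
    rw [Fin.sum_univ_castSucc (fun i : Fin (m + 1) => ‖v i‖ ^ 2)]
    congr 1
    exact Finset.sum_congr rfl fun i _ => by rw [hv' i]
  constructor
  · have hle : |v (Fin.last m)| ^ 2 ≤ ‖v‖ ^ 2 := by
      have habs : |v (Fin.last m)| ^ 2 = ‖v (Fin.last m)‖ ^ 2 := by
        rw [Real.norm_eq_abs]
      rw [hsq, hsum, habs]
      linarith
    calc |v (Fin.last m)| = √(|v (Fin.last m)| ^ 2) := (Real.sqrt_sq (abs_nonneg _)).symm
      _ ≤ √(‖v‖ ^ 2) := Real.sqrt_le_sqrt hle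
      _ = ‖v‖ := Real.sqrt_sq (norm_nonneg _)
  · have hle : ‖v'‖ ^ 2 ≤ ‖v‖ ^ 2 := by
      rw [hsq, hsum, htsq]
      nlinarith [sq_nonneg ‖v (Fin.last m)‖]
    calc ‖v'‖ = √(‖v'‖ ^ 2) := (Real.sqrt_sq (norm_nonneg _)).symm
      _ ≤ √(‖v‖ ^ 2) := Real.sqrt_le_sqrt hle
      _ = ‖v‖ := Real.sqrt_sq (norm_nonneg _)

/-- Volume comparison for balls with radius ratio at least `1/4`. -/
lemma aux_vol (m : ℕ) (y z : EuclideanSpace ℝ (Fin (m + 1))) {r ρ : ℝ}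
    (hr : 0 < r) (hρ : r / 4 ≤ ρ) :
    (4 : ℝ≥0∞)⁻¹ ^ (m + 1) * volume (ball y r) ≤ volume (ball z ρ) := by
  have h0ρ : 0 ≤ ρ := le_trans (by positivity) hρ
  rw [Measure.addHaar_ball volume y hr.le, Measure.addHaar_ball volume z h0ρ,
    finrank_euclideanSpace_fin, ← mul_assoc]
  gcongr
  have h4 : (4 : ℝ≥0∞)⁻¹ = ENNReal.ofReal (4⁻¹ : ℝ) := by
    rw [ENNReal.ofReal_inv_of_pos (by norm_num)]
    norm_num
  rw [h4, ← ENNReal.ofReal_pow (by norm_num), ← ENNReal.ofReal_mul (by positivity)]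
  apply ENNReal.ofReal_le_ofReal
  rw [← mul_pow]
  apply pow_le_pow_left₀ (by positivity)
  linarith

/-- Let `n = m + 1 ≥ 2`, `δ ∈ [0, 1/(2n)]`, `R > 0`, and let `Ω ⊆ ℝⁿ` be a
bounded open `(δ, 4R)`-Lipschitz set.  Then for every `y ∈ Ω` and every `0 < r ≤ 4R`,
`|Ω ∩ B_r(y)| ≥ 4^{-n} |B_r(y)|`. -/
theorem stmt6 (m : ℕ) (hm : 1 ≤ m) (δ R : ℝ)
    (hδ0 : 0 ≤ δ) (hδ : δ ≤ 1 / (2 * (m + 1 : ℝ))) (hR : 0 < R)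
    (Ω : Set (EuclideanSpace ℝ (Fin (m + 1))))
    (hΩopen : IsOpen Ω) (hΩbdd : Bornology.IsBounded Ω)
    (hlip : IsDeltaRLipschitz m δ (4 * R) Ω) :
    ∀ y ∈ Ω, ∀ r : ℝ, 0 < r → r ≤ 4 * R →
      (4 : ℝ≥0∞)⁻¹ ^ (m + 1) * volume (ball y r) ≤ volume (Ω ∩ ball y r) := by
  intro y hy r hr hr4R
  have hm1 : (1:ℝ) ≤ (m : ℝ) := by exact_mod_cast hm
  have hδ4 : δ ≤ 4⁻¹ := by
    have h2 : 1 / (2 * ((m:ℝ) + 1)) ≤ 4⁻¹ := by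
      rw [div_le_iff₀ (by linarith)]
      nlinarith
    linarith
  by_cases hc : ball y (r / 4) ⊆ Ω
  · refine le_trans (aux_vol m y y hr (le_refl _)) (measure_mono ?_)
    exact fun x hx => ⟨hc hx, ball_subset_ball (by linarith) hx⟩
  · obtain ⟨z, hzball, hz⟩ := Set.not_subset.1 hc
    have hyball : y ∈ ball y (r / 4) := mem_ball_self (by positivity)
    obtain ⟨x₀, hx₀seg, hx₀f⟩ := aux_pre_frontier (convex_segment y z).isPreconnected
      (left_mem_segment ℝ y z) (right_mem_segment ℝ y z) hy hΩopen hz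
    have hx₀y : dist x₀ y < r / 4 := by
      have := (convex_ball y (r / 4)).segment_subset hyball hzball hx₀seg
      rwa [mem_ball] at this
    obtain ⟨O, ψ, hψ, hset⟩ := hlip x₀ hx₀f
    have hψd : ∀ a b : EuclideanSpace ℝ (Fin m), dist (ψ a) (ψ b) ≤ δ * dist a b := by
      intro a b
      have := hψ.dist_le_mul a b
      rwa [Real.coe_toNNReal δ hδ0] at this
    -- ψ 0 ≤ 0
    have hψ0 : ψ 0 ≤ 0 := by
      by_contra hpos
      push_neg at hpos
      set a := ψ 0 with ha
      have hε : (0:ℝ) < min (4 * R) (a / 2) := by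
        apply lt_min <;> linarith
      obtain ⟨u, hu, hud⟩ := Metric.mem_closure_iff.1 hx₀f.1 _ hε
      set v : EuclideanSpace ℝ (Fin (m + 1)) := O (u - x₀) with hv
      set v' : EuclideanSpace ℝ (Fin m) := WithLp.toLp 2 (fun i => v (Fin.castSucc i)) with hv'
      have hvn : ‖v‖ < min (4 * R) (a / 2) := by
        rw [hv, O.norm_map, ← dist_eq_norm, dist_comm]
        exact hud
      have hvS : v ∈ (fun x => O (x - x₀)) '' Ω ∩ ball 0 (4 * R) := by
        refine ⟨⟨u, hu, rfl⟩, ?_⟩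
        rw [mem_ball, dist_zero_right]
        exact lt_of_lt_of_le hvn (min_le_left _ _)
      rw [hset] at hvS
      have hlt : ψ v' < v (Fin.last m) := hvS.2
      obtain ⟨hb1, hv'le⟩ := aux_coord m v v' fun i => rfl
      have hψv : a - δ * ‖v'‖ ≤ ψ v' := by
        have h1 : ψ 0 - ψ v' ≤ δ * dist v' (0 : EuclideanSpace ℝ (Fin m)) := by
          calc ψ 0 - ψ v' ≤ dist (ψ 0) (ψ v') := by
                rw [Real.dist_eq]; exact le_abs_self _
            _ ≤ δ * dist (0 : EuclideanSpace ℝ (Fin m)) v' := hψd _ _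
            _ = δ * dist v' (0 : EuclideanSpace ℝ (Fin m)) := by rw [dist_comm]
        rw [dist_zero_right] at h1
        linarith
      have hva : ‖v‖ < a / 2 := lt_of_lt_of_le hvn (min_le_right _ _)
      have hδ1 : δ ≤ 1 := by linarith
      have hlast : v (Fin.last m) ≤ ‖v‖ := le_trans (le_abs_self _) hb1
      nlinarith [norm_nonneg v', norm_nonneg v]
    -- main construction
    have h2δ : (0:ℝ) < 2 + δ := by linarith
    set ρ := 3 / 4 * r / (2 + δ) with hρdef
    have hρpos : 0 < ρ := by positivity
    have hρsum : (2 + δ) * ρ = 3 / 4 * r := by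
      rw [hρdef]; field_simp
    have hρge : r / 4 ≤ ρ := by
      rw [hρdef, le_div_iff₀ h2δ]; nlinarith
    set c : EuclideanSpace ℝ (Fin (m + 1)) :=
      EuclideanSpace.single (Fin.last m) ((1 + δ) * ρ) with hcdef
    have hcn : ‖c‖ = (1 + δ) * ρ := by
      rw [hcdef, EuclideanSpace.norm_single, Real.norm_eq_abs, abs_of_nonneg (by positivity)]
    have hclast : c (Fin.last m) = (1 + δ) * ρ := by
      rw [hcdef, EuclideanSpace.single_apply, if_pos rfl]
    have hccast : ∀ i : Fin m, c (Fin.castSucc i) = 0 := by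
      intro i
      rw [hcdef, EuclideanSpace.single_apply, if_neg (Fin.castSucc_lt_last i).ne]
    have hkey : ball (O.symm c + x₀) ρ ⊆ Ω ∩ ball y r := by
      intro w hw
      have hwd : dist w (O.symm c + x₀) < ρ := mem_ball.1 hw
      set x : EuclideanSpace ℝ (Fin (m + 1)) := O (w - x₀) with hxdef
      set x' : EuclideanSpace ℝ (Fin m) := WithLp.toLp 2 (fun i => x (Fin.castSucc i)) with hx'def
      have hd : ‖x - c‖ < ρ := by
        have heq : O (w - (O.symm c + x₀)) = x - c := by
          have h1 : w - (O.symm c + x₀) = (w - x₀) - O.symm c := by abel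
          rw [h1, map_sub, O.apply_symm_apply, hxdef]
        rw [← heq, O.norm_map, ← dist_eq_norm]
        exact hwd
      have hcoord : ∀ i, x' i = (x - c) (Fin.castSucc i) := by
        intro i
        rw [PiLp.sub_apply, hccast i, sub_zero]
      obtain ⟨hb1, hb2⟩ := aux_coord m (x - c) x' hcoord
      have hlastx : δ * ρ < x (Fin.last m) := by
        have h := lt_of_le_of_lt hb1 hd
        rw [PiLp.sub_apply, hclast, abs_lt] at h
        linarith [h.1]
      have htailx : ψ x' ≤ δ * ρ := by
        have hn : ‖x'‖ ≤ ρ := le_trans hb2 hd.le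
        have h1 : ψ x' - ψ 0 ≤ δ * dist x' (0 : EuclideanSpace ℝ (Fin m)) := by
          calc ψ x' - ψ 0 ≤ dist (ψ x') (ψ 0) := by
                rw [Real.dist_eq]; exact le_abs_self _
            _ ≤ δ * dist x' (0 : EuclideanSpace ℝ (Fin m)) := hψd _ _
        rw [dist_zero_right] at h1
        nlinarith
      have hxball : x ∈ ball (0 : EuclideanSpace ℝ (Fin (m + 1))) (4 * R) := by
        rw [mem_ball, dist_zero_right]
        calc ‖x‖ = ‖(x - c) + c‖ := by rw [sub_add_cancel]
          _ ≤ ‖x - c‖ + ‖c‖ := norm_add_le _ _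
          _ < ρ + (1 + δ) * ρ := by rw [hcn]; linarith
          _ = (2 + δ) * ρ := by ring
          _ = 3 / 4 * r := hρsum
          _ < 4 * R := by linarith
      have hxS : x ∈ (fun x => O (x - x₀)) '' Ω ∩ ball 0 (4 * R) := by
        rw [hset]
        exact ⟨hxball, lt_of_le_of_lt htailx hlastx⟩
      obtain ⟨⟨u, hu, huw⟩, -⟩ := hxS
      have huweq : u = w := by
        have h1 : u - x₀ = w - x₀ := O.injective huw
        have h2 := congrArg (· + x₀) h1
        simpa using h2
      refine ⟨huweq ▸ hu, ?_⟩
      rw [mem_ball]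
      calc dist w y ≤ dist w (O.symm c + x₀) + dist (O.symm c + x₀) x₀ + dist x₀ y :=
          dist_triangle4 w (O.symm c + x₀) x₀ y
        _ < ρ + ((1 + δ) * ρ) + r / 4 := by
            have hdx : dist (O.symm c + x₀) x₀ = (1 + δ) * ρ := by
              rw [dist_eq_norm, add_sub_cancel_right, O.symm.norm_map, hcn]
            rw [hdx]
            linarith
        _ = (2 + δ) * ρ + r / 4 := by ring
        _ = 3 / 4 * r + r / 4 := by rw [hρsum]
        _ = r := by ring
    exact le_trans (aux_vol m y (O.symm c + x₀) hr hρge) (measure_mono hkey)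
end

section
/- Let n ≥ 2, δ ∈ [0, 1/(2n)], R > 0, and let Ω ⊆ ℝⁿ be a bounded open set which is (δ, 4R)-Lipschitz. Then for every boundary point y ∈ ∂Ω and every radius 0 < r ≤ 4R, one has |B_r(y) ∩ (ℝⁿ \ Ω)| ≥ 4^{−n} |B_r(y)|, where B_r(y) is the open ball of radius r centered at y and |·| denotes Lebesgue measure. -/
open MeasureTheory Metric
open scoped ENNReal

lemma euclid_coord_abs_le {k : ℕ} (x : EuclideanSpace ℝ (Fin k)) (j : Fin k) :
    |x j| ≤ ‖x‖ := by
  rw [EuclideanSpace.norm_eq]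
  have h1 : |x j| = Real.sqrt (‖x j‖ ^ 2) := by
    rw [Real.norm_eq_abs, Real.sqrt_sq_eq_abs, abs_abs]
  rw [h1]
  apply Real.sqrt_le_sqrt
  exact Finset.single_le_sum (f := fun i => ‖x i‖ ^ 2) (fun i _ => by positivity)
    (Finset.mem_univ j)

lemma euclid_proj_norm_le {m : ℕ} (w : EuclideanSpace ℝ (Fin (m + 1)))
    (w' : EuclideanSpace ℝ (Fin m)) (hw' : ∀ i, w' i = w (Fin.castSucc i)) :
    ‖w'‖ ≤ ‖w‖ := by
  rw [EuclideanSpace.norm_eq, EuclideanSpace.norm_eq]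
  apply Real.sqrt_le_sqrt
  rw [Fin.sum_univ_castSucc (f := fun j => ‖w j‖ ^ 2)]
  simp only [hw']
  nlinarith [norm_nonneg (w (Fin.last m)), sq_nonneg ‖w (Fin.last m)‖]

lemma euclid_coord_lip {k : ℕ} (j : Fin k) :
    LipschitzWith 1 (fun x : EuclideanSpace ℝ (Fin k) => x j) := by
  apply LipschitzWith.of_dist_le_mul
  intro x y
  rw [NNReal.coe_one, one_mul, Real.dist_eq, dist_eq_norm]
  exact euclid_coord_abs_le (x - y) j

lemma euclid_proj_lip {m : ℕ} :
    LipschitzWith 1 (fun x : EuclideanSpace ℝ (Fin (m + 1)) =>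
      (show EuclideanSpace ℝ (Fin m) from WithLp.toLp 2 (fun i : Fin m => x (Fin.castSucc i)))) := by
  apply LipschitzWith.of_dist_le_mul
  intro x y
  rw [NNReal.coe_one, one_mul, dist_eq_norm, dist_eq_norm]
  exact euclid_proj_norm_le (x - y) _ (fun i => rfl)

/-- Let `n = m + 1 ≥ 2`, `δ ∈ [0, 1/(2n)]`, `R > 0`, and let `Ω ⊆ ℝⁿ` be a
bounded open `(δ, 4R)`-Lipschitz set.  Then for every boundary point `y ∈ ∂Ω` and every
`0 < r ≤ 4R`, `|B_r(y) ∩ (ℝⁿ \\ Ω)| ≥ 4^{-n} |B_r(y)|`. -/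
theorem stmt7 (m : ℕ) (hm : 1 ≤ m) (δ R : ℝ)
    (hδ0 : 0 ≤ δ) (hδ : δ ≤ 1 / (2 * (m + 1 : ℝ))) (hR : 0 < R)
    (Ω : Set (EuclideanSpace ℝ (Fin (m + 1))))
    (hΩopen : IsOpen Ω) (hΩbdd : Bornology.IsBounded Ω)
    (hlip : IsDeltaRLipschitz m δ (4 * R) Ω) :
    ∀ y ∈ frontier Ω, ∀ r : ℝ, 0 < r → r ≤ 4 * R →
      (4 : ℝ≥0∞)⁻¹ ^ (m + 1) * volume (ball y r) ≤ volume (ball y r ∩ Ωᶜ) := by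
  intro y hy r hr hr4R
  obtain ⟨O, ψ, hψ, hgraph⟩ := hlip y hy
  have hR4 : (0:ℝ) < 4 * R := by linarith
  have hyc : y ∈ closure Ω := hy.1
  have hyn : y ∉ Ω := by
    rw [hΩopen.frontier_eq] at hy; exact hy.2
  -- `ψ 0 = 0`
  have hzero_proj : WithLp.toLp 2 (fun i : Fin m => (0 : EuclideanSpace ℝ (Fin (m+1))) (Fin.castSucc i))
      = (0 : EuclideanSpace ℝ (Fin m)) := rfl
  have hψ0_nonneg : 0 ≤ ψ 0 := by
    by_contra h
    push_neg at h
    have h0mem : (0 : EuclideanSpace ℝ (Fin (m+1))) ∈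
        {x ∈ ball (0 : EuclideanSpace ℝ (Fin (m+1))) (4*R) |
          ψ (WithLp.toLp 2 (fun i : Fin m => x (Fin.castSucc i))) < x (Fin.last m)} := by
      refine ⟨mem_ball_self hR4, ?_⟩
      show ψ (WithLp.toLp 2 (fun i : Fin m => (0 : EuclideanSpace ℝ (Fin (m+1))) (Fin.castSucc i))) < 0
      rw [hzero_proj]; exact h
    rw [← hgraph] at h0mem
    obtain ⟨⟨x, hxΩ, hOx⟩, -⟩ := h0mem
    have : x - y = 0 := by
      have := congrArg O.symm hOx
      simpa using this
    have : x = y := by rwa [sub_eq_zero] at this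
    exact hyn (this ▸ hxΩ)
  have hψ0_nonpos : ψ 0 ≤ 0 := by
    have hcl : (0 : EuclideanSpace ℝ (Fin (m+1))) ∈
        closure ((fun x => O (x - y)) '' Ω ∩ ball 0 (4*R)) := by
      rw [Metric.mem_closure_iff]
      intro ε hε
      obtain ⟨x, hxΩ, hxd⟩ := Metric.mem_closure_iff.mp hyc (min ε (4*R))
        (lt_min hε hR4)
      refine ⟨O (x - y), ⟨⟨x, hxΩ, rfl⟩, ?_⟩, ?_⟩
      · rw [mem_ball, dist_zero_right, O.norm_map, ← dist_eq_norm, dist_comm]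
        exact hxd.trans_le (min_le_right _ _)
      · rw [dist_comm, dist_zero_right, O.norm_map, ← dist_eq_norm, dist_comm]
        exact hxd.trans_le (min_le_left _ _)
    rw [hgraph] at hcl
    have hCclosed : IsClosed {x : EuclideanSpace ℝ (Fin (m+1)) |
        ψ (WithLp.toLp 2 (fun i : Fin m => x (Fin.castSucc i))) ≤ x (Fin.last m)} :=
      isClosed_le (hψ.continuous.comp euclid_proj_lip.continuous)
        (euclid_coord_lip (Fin.last m)).continuous
    have hsubC := closure_minimal
      (fun x hx => le_of_lt hx.2 :
        {x ∈ ball (0 : EuclideanSpace ℝ (Fin (m+1))) (4*R) |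
          ψ (WithLp.toLp 2 (fun i : Fin m => x (Fin.castSucc i))) < x (Fin.last m)} ⊆
        {x : EuclideanSpace ℝ (Fin (m+1)) |
          ψ (WithLp.toLp 2 (fun i : Fin m => x (Fin.castSucc i))) ≤ x (Fin.last m)}) hCclosed
    exact hsubC hcl
  have hψ0 : ψ 0 = 0 := le_antisymm hψ0_nonpos hψ0_nonneg
  -- the interior ball
  set c : EuclideanSpace ℝ (Fin (m+1)) := EuclideanSpace.single (Fin.last m) (-(r/2)) with hc
  set p : EuclideanSpace ℝ (Fin (m+1)) := y + O.symm c with hp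
  have hcnorm : ‖c‖ = r / 2 := by
    rw [hc, EuclideanSpace.norm_single, Real.norm_eq_abs, abs_neg, abs_of_nonneg (by linarith)]
  have hsub : ball p (r/3) ⊆ ball y r ∩ Ωᶜ := by
    intro x hx
    have hxp : ‖x - p‖ < r / 3 := by rwa [mem_ball, dist_eq_norm] at hx
    have hzc : ‖O (x - y) - c‖ < r / 3 := by
      have h1 : O ((x - y) - O.symm c) = O (x - y) - c := by
        rw [map_sub, O.apply_symm_apply]
      rw [← h1, O.norm_map, sub_sub, ← hp]
      exact hxp
    have hznorm : ‖O (x - y)‖ < r := by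
      calc ‖O (x - y)‖ = ‖c + (O (x - y) - c)‖ := by rw [add_sub_cancel]
        _ ≤ ‖c‖ + ‖O (x - y) - c‖ := norm_add_le _ _
        _ < r/2 + r/3 := by rw [hcnorm]; linarith
        _ ≤ r := by linarith
    have hxball : x ∈ ball y r := by
      rw [mem_ball, dist_eq_norm, ← O.norm_map (x - y)]
      exact hznorm
    refine ⟨hxball, fun hxΩ => ?_⟩
    have hzmem : O (x - y) ∈ (fun x => O (x - y)) '' Ω ∩ ball 0 (4*R) :=
      ⟨⟨x, hxΩ, rfl⟩, by rw [mem_ball, dist_zero_right]; linarith⟩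
    rw [hgraph] at hzmem
    have hlt : ψ (WithLp.toLp 2 (fun i : Fin m => (O (x - y)) (Fin.castSucc i))) <
        (O (x - y)) (Fin.last m) := hzmem.2
    set z := O (x - y) with hz
    -- bound on last coordinate
    have hclast : c (Fin.last m) = -(r/2) := by
      rw [hc, EuclideanSpace.single_apply, if_pos rfl]
    have hlastabs : |z (Fin.last m) - c (Fin.last m)| ≤ ‖z - c‖ := by
      have := euclid_coord_abs_le (z - c) (Fin.last m)
      simpa using this
    have hlast : z (Fin.last m) < -(r/6) := by
      rw [hclast] at hlastabs
      have h2 := abs_lt.mp (lt_of_le_of_lt hlastabs hzc)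
      linarith [h2.2]
    -- bound on projection
    have hw' : ∀ i : Fin m,
        (show EuclideanSpace ℝ (Fin m) from WithLp.toLp 2 (fun i : Fin m => z (Fin.castSucc i))) i
          = (z - c) (Fin.castSucc i) := by
      intro i
      have hc0 : c (Fin.castSucc i) = 0 := by
        rw [hc, EuclideanSpace.single_apply, if_neg (Fin.castSucc_lt_last i).ne]
      show z (Fin.castSucc i) = z (Fin.castSucc i) - c (Fin.castSucc i)
      rw [hc0, sub_zero]
    have hproj : ‖(show EuclideanSpace ℝ (Fin m) from WithLp.toLp 2 (fun i : Fin m => z (Fin.castSucc i)))‖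
        ≤ ‖z - c‖ := euclid_proj_norm_le (z - c) _ hw'
    -- Lipschitz bound on ψ
    have hψb : |ψ (WithLp.toLp 2 (fun i : Fin m => z (Fin.castSucc i))) - ψ 0| ≤
        δ * ‖(show EuclideanSpace ℝ (Fin m) from WithLp.toLp 2 (fun i : Fin m => z (Fin.castSucc i)))‖ := by
      have := hψ.dist_le_mul
        (show EuclideanSpace ℝ (Fin m) from WithLp.toLp 2 (fun i : Fin m => z (Fin.castSucc i))) 0
      rwa [Real.dist_eq, dist_zero_right, Real.coe_toNNReal δ hδ0] at this
    have hδ4 : δ ≤ 1/4 := by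
      have h2 : (4:ℝ) ≤ 2 * (m + 1 : ℝ) := by
        have : (1:ℝ) ≤ (m : ℝ) := by exact_mod_cast hm
        linarith
      calc δ ≤ 1 / (2 * (m + 1 : ℝ)) := hδ
        _ ≤ 1/4 := by
          apply div_le_div_of_nonneg_left (by norm_num) (by norm_num) h2
    have hnn : (0:ℝ) ≤ ‖(show EuclideanSpace ℝ (Fin m) from
        WithLp.toLp 2 (fun i : Fin m => z (Fin.castSucc i)))‖ := norm_nonneg _
    rw [hψ0, sub_zero] at hψb
    have habs := abs_le.mp hψb
    nlinarith [habs.1, hproj, hzc, hlast, hlt, hδ4, hδ0, hnn, hr]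
  -- volume comparison
  have hball1 : volume (ball p (r/3)) =
      ENNReal.ofReal ((r/3) ^ (m+1)) * volume (ball (0 : EuclideanSpace ℝ (Fin (m+1))) 1) := by
    rw [Measure.addHaar_ball volume p (by positivity), finrank_euclideanSpace_fin]
  have hball2 : volume (ball y r) =
      ENNReal.ofReal (r ^ (m+1)) * volume (ball (0 : EuclideanSpace ℝ (Fin (m+1))) 1) := by
    rw [Measure.addHaar_ball volume y hr.le, finrank_euclideanSpace_fin]
  calc (4 : ℝ≥0∞)⁻¹ ^ (m + 1) * volume (ball y r)
      = (ENNReal.ofReal ((1:ℝ)/4)) ^ (m+1) * (ENNReal.ofReal (r ^ (m+1)) *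
          volume (ball (0 : EuclideanSpace ℝ (Fin (m+1))) 1)) := by
        rw [hball2]
        congr 1
        congr 1
        rw [ENNReal.ofReal_div_of_pos (by norm_num), ENNReal.ofReal_one,
          ENNReal.ofReal_ofNat, one_div]
    _ = ENNReal.ofReal (((1:ℝ)/4) ^ (m+1) * r ^ (m+1)) *
          volume (ball (0 : EuclideanSpace ℝ (Fin (m+1))) 1) := by
        rw [← ENNReal.ofReal_pow (by norm_num), ← mul_assoc,
          ← ENNReal.ofReal_mul (by positivity)]
    _ ≤ ENNReal.ofReal ((r/3) ^ (m+1)) *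
          volume (ball (0 : EuclideanSpace ℝ (Fin (m+1))) 1) := by
        apply mul_le_mul_left
        apply ENNReal.ofReal_le_ofReal
        have : ((1:ℝ)/4) ^ (m+1) * r ^ (m+1) = (r/4) ^ (m+1) := by
          rw [← mul_pow]; ring_nf
        rw [this]
        apply pow_le_pow_left₀ (by positivity)
        linarith
    _ = volume (ball p (r/3)) := hball1.symm
    _ ≤ volume (ball y r ∩ Ωᶜ) := measure_mono hsub
end

section
/- Let n ≥ 2, p ∈ (1,∞) and Λ ≥ 1. Let M₀ be a real symmetric positive-definite n×n matrix, set ω₀ := ‖M₀‖ (spectral norm), and assume Λ^{−1} ω₀ |ξ| ≤ |M₀ξ| ≤ ω₀|ξ| for all ξ ∈ ℝⁿ. Let v ∈ ℝ^{n−1} with |v| ≤ 1/2, let N := N(v) and T := N^{−1}. Then there is a constant c depending only on n, p and Λ such that for all ξ ∈ ℝⁿ: | |M₀ξ|^{p−2} M₀² ξ − Tᵗ |M₀Tξ|^{p−2} M₀² Tξ | ≤ c |v| ω₀^p · min( |ξ|^{p−1}, |Tξ|^{p−1} ), where Tᵗ is the transpose of T. -/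
open Matrix

/-- The Euclidean norm of a vector in `ℝᵏ`. -/
noncomputable def euclNorm {k : ℕ} (x : Fin k → ℝ) : ℝ :=
  Real.sqrt (∑ i, x i ^ 2)

/-- For `v ∈ ℝ^{n-1}` (with `n = m + 1`), the matrix `N(v)` with all diagonal entries `1`,
last-row entries `N_{n,j} = -v_j` for `j ≤ n - 1`, and all other entries `0`; this is the
Jacobian of the shear map `Ψ(x', xₙ) = (x', xₙ - ψ x')` when `v = ∇ψ(x')`. -/
def shearN (m : ℕ) (v : Fin m → ℝ) : Matrix (Fin (m + 1)) (Fin (m + 1)) ℝ :=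
  1 + Matrix.of (fun i j : Fin (m + 1) =>
    if h : i = Fin.last m ∧ (j : ℕ) < m then -v ⟨(j : ℕ), h.2⟩ else 0)

/-! ### Auxiliary lemmas on `euclNorm` -/

lemma euclNorm_eq {k : ℕ} (x : Fin k → ℝ) :
    euclNorm x = ‖(WithLp.equiv 2 (Fin k → ℝ)).symm x‖ := by
  rw [EuclideanSpace.norm_eq]; simp [euclNorm, sq_abs]

lemma euclNorm_nonneg {k : ℕ} (x : Fin k → ℝ) : 0 ≤ euclNorm x := Real.sqrt_nonneg _

lemma euclNorm_eq_zero {k : ℕ} {x : Fin k → ℝ} : euclNorm x = 0 ↔ x = 0 := by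
  rw [euclNorm_eq, norm_eq_zero]
  exact ⟨fun h => by simpa using congrArg (WithLp.equiv 2 (Fin k → ℝ)) h,
    fun h => by simp [h, WithLp.equiv_symm_apply]⟩

lemma euclNorm_add_le {k : ℕ} (x y : Fin k → ℝ) : euclNorm (x + y) ≤ euclNorm x + euclNorm y := by
  rw [euclNorm_eq, euclNorm_eq, euclNorm_eq, WithLp.equiv_symm_apply, WithLp.toLp_add]; exact norm_add_le _ _

lemma euclNorm_sub_le {k : ℕ} (x y : Fin k → ℝ) : euclNorm (x - y) ≤ euclNorm x + euclNorm y := by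
  rw [euclNorm_eq, euclNorm_eq, euclNorm_eq, WithLp.equiv_symm_apply, WithLp.toLp_sub]; exact norm_sub_le _ _

lemma euclNorm_smul {k : ℕ} (c : ℝ) (x : Fin k → ℝ) : euclNorm (c • x) = |c| * euclNorm x := by
  rw [euclNorm_eq, euclNorm_eq, WithLp.equiv_symm_apply, WithLp.toLp_smul, norm_smul, Real.norm_eq_abs]

lemma abs_euclNorm_sub_euclNorm_le {k : ℕ} (x y : Fin k → ℝ) :
    |euclNorm x - euclNorm y| ≤ euclNorm (x - y) := by
  rw [euclNorm_eq, euclNorm_eq, euclNorm_eq, WithLp.equiv_symm_apply, WithLp.toLp_sub]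
  exact abs_norm_sub_norm_le _ _

lemma abs_sum_le_euclNorm_mul_euclNorm {k : ℕ} (v x : Fin k → ℝ) :
    |∑ i, v i * x i| ≤ euclNorm v * euclNorm x := by
  have h := Finset.sum_mul_sq_le_sq_mul_sq Finset.univ v x
  have := Real.sqrt_le_sqrt h
  rwa [Real.sqrt_mul (by positivity), Real.sqrt_sq_eq_abs] at this

/-! ### The shear matrix -/

def Emat (m : ℕ) (v : Fin m → ℝ) : Matrix (Fin (m + 1)) (Fin (m + 1)) ℝ :=
  Matrix.of (fun i j : Fin (m + 1) =>
    if h : i = Fin.last m ∧ (j : ℕ) < m then -v ⟨(j : ℕ), h.2⟩ else 0)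

lemma shearN_eq (m : ℕ) (v : Fin m → ℝ) : shearN m v = 1 + Emat m v := rfl

lemma Emat_mul_Emat (m : ℕ) (v : Fin m → ℝ) : Emat m v * Emat m v = 0 := by
  ext i j
  simp only [Matrix.mul_apply, Matrix.zero_apply, Emat, Matrix.of_apply]
  apply Finset.sum_eq_zero
  intro k _
  by_cases h : i = Fin.last m ∧ (k : ℕ) < m
  · have : ¬(k = Fin.last m ∧ (j : ℕ) < m) := by
      rintro ⟨rfl, -⟩
      exact absurd h.2 (by simp)
    rw [dif_neg this, mul_zero]
  · rw [dif_neg h, zero_mul]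

lemma shearN_inv (m : ℕ) (v : Fin m → ℝ) : (shearN m v)⁻¹ = 1 - Emat m v := by
  apply Matrix.inv_eq_right_inv
  rw [shearN_eq, add_mul, one_mul, mul_sub, mul_one, sub_add_sub_comm,
    Emat_mul_Emat]
  abel

lemma Emat_mulVec (m : ℕ) (v : Fin m → ℝ) (x : Fin (m+1) → ℝ) :
    (Emat m v).mulVec x =
      fun i => if i = Fin.last m then -(∑ j : Fin m, v j * x j.castSucc) else 0 := by
  funext i
  simp only [Matrix.mulVec, dotProduct, Emat, Matrix.of_apply]
  by_cases hi : i = Fin.last m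
  · subst hi
    rw [if_pos rfl, Fin.sum_univ_castSucc]
    rw [dif_neg (by simp), zero_mul, add_zero, ← Finset.sum_neg_distrib]
    apply Finset.sum_congr rfl
    intro j _
    rw [dif_pos ⟨rfl, by simp [Fin.is_lt]⟩]
    simp [neg_mul]
  · rw [if_neg hi]
    apply Finset.sum_eq_zero
    intro j _
    rw [dif_neg (fun h => hi h.1), zero_mul]

lemma euclNorm_single {k : ℕ} (i₀ : Fin k) (t : ℝ) :
    euclNorm (fun i => if i = i₀ then t else 0) = |t| := by
  unfold euclNorm
  rw [show (∑ i, (if i = i₀ then t else 0) ^ 2) = t ^ 2 by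
    rw [Finset.sum_eq_single i₀] <;> simp +contextual]
  exact Real.sqrt_sq_eq_abs t

lemma euclNorm_castSucc_le {m : ℕ} (x : Fin (m+1) → ℝ) :
    euclNorm (fun j : Fin m => x j.castSucc) ≤ euclNorm x := by
  apply Real.sqrt_le_sqrt
  rw [Fin.sum_univ_castSucc (f := fun i => x i ^ 2)]
  nlinarith [sq_nonneg (x (Fin.last m))]

lemma abs_apply_le_euclNorm {k : ℕ} (x : Fin k → ℝ) (i : Fin k) : |x i| ≤ euclNorm x := by
  rw [← Real.sqrt_sq_eq_abs]
  exact Real.sqrt_le_sqrt (Finset.single_le_sum (f := fun i => x i ^ 2)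
    (fun i _ => sq_nonneg _) (Finset.mem_univ i))

lemma euclNorm_Emat_mulVec_le (m : ℕ) (v : Fin m → ℝ) (x : Fin (m+1) → ℝ) :
    euclNorm ((Emat m v).mulVec x) ≤ euclNorm v * euclNorm x := by
  rw [Emat_mulVec, euclNorm_single, abs_neg]
  calc |∑ j : Fin m, v j * x j.castSucc| ≤ euclNorm v * euclNorm (fun j : Fin m => x j.castSucc) :=
        abs_sum_le_euclNorm_mul_euclNorm _ _
    _ ≤ euclNorm v * euclNorm x := by
        have := euclNorm_castSucc_le x
        have := euclNorm_nonneg v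
        nlinarith

lemma EmatT_mulVec (m : ℕ) (v : Fin m → ℝ) (x : Fin (m+1) → ℝ) :
    (Emat m v)ᵀ.mulVec x =
      fun j : Fin (m+1) => if h : (j : ℕ) < m then -v ⟨j, h⟩ * x (Fin.last m) else 0 := by
  funext j
  simp only [Matrix.mulVec, dotProduct, Emat, Matrix.transpose_apply, Matrix.of_apply]
  by_cases hj : (j : ℕ) < m
  · rw [dif_pos hj, Finset.sum_eq_single (Fin.last m)]
    · rw [dif_pos ⟨rfl, hj⟩]
    · intro i _ hi; rw [dif_neg (fun h => hi h.1), zero_mul]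
    · simp
  · rw [dif_neg hj]
    apply Finset.sum_eq_zero
    intro i _
    rw [dif_neg (fun h => hj h.2), zero_mul]

lemma euclNorm_EmatT_mulVec_le (m : ℕ) (v : Fin m → ℝ) (x : Fin (m+1) → ℝ) :
    euclNorm ((Emat m v)ᵀ.mulVec x) ≤ euclNorm v * euclNorm x := by
  rw [EmatT_mulVec]
  have key : euclNorm (fun j : Fin (m+1) =>
      if h : (j : ℕ) < m then -v ⟨j, h⟩ * x (Fin.last m) else 0) = euclNorm v * |x (Fin.last m)| := by
    have hsum : (∑ i : Fin (m+1),
        (if h : (i : ℕ) < m then -v ⟨i, h⟩ * x (Fin.last m) else 0) ^ 2)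
        = (∑ j : Fin m, v j ^ 2) * x (Fin.last m) ^ 2 := by
      rw [Fin.sum_univ_castSucc (f := fun j : Fin (m+1) =>
        (if h : (j : ℕ) < m then -v ⟨j, h⟩ * x (Fin.last m) else 0) ^ 2),
        dif_neg (by simp), Finset.sum_mul]
      simp [mul_pow, Fin.is_lt]
    unfold euclNorm
    rw [hsum, Real.sqrt_mul (by positivity), Real.sqrt_sq_eq_abs]
  rw [key]
  have := abs_apply_le_euclNorm x (Fin.last m)
  have := euclNorm_nonneg v
  nlinarith

/-! ### The scalar mean value estimate and the key difference estimate -/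

lemma rpow_bound_on_Icc (q A : ℝ) (hA : 0 < A) {x : ℝ}
    (hx : x ∈ Set.Icc (A/2) (2*A)) : x ^ q ≤ 2 ^ |q| * A ^ q := by
  have hx0 : 0 < x := lt_of_lt_of_le (by linarith) hx.1
  rcases le_or_gt 0 q with h | h
  · rw [abs_of_nonneg h]
    calc x ^ q ≤ (2*A) ^ q := Real.rpow_le_rpow hx0.le hx.2 h
      _ = 2 ^ q * A ^ q := Real.mul_rpow (by norm_num) hA.le
  · rw [abs_of_neg h]
    calc x ^ q ≤ (A/2) ^ q := Real.rpow_le_rpow_of_nonpos (by linarith) hx.1 h.le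
      _ = 2 ^ (-q) * A ^ q := by
          rw [Real.div_rpow hA.le (by norm_num), div_eq_mul_inv, ← Real.rpow_neg (by norm_num)]
          ring

lemma rpow_diff_le (q A : ℝ) (hA : 0 < A) {s t : ℝ}
    (hs : s ∈ Set.Icc (A/2) (2*A)) (ht : t ∈ Set.Icc (A/2) (2*A)) :
    |s ^ q - t ^ q| ≤ (|q| * (2 ^ |q - 1| * A ^ (q - 1))) * |s - t| := by
  have key := Convex.norm_image_sub_le_of_norm_hasDerivWithin_le
    (f := fun x : ℝ => x ^ q) (f' := fun x : ℝ => q * x ^ (q - 1))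
    (s := Set.Icc (A/2) (2*A)) (C := |q| * (2 ^ |q - 1| * A ^ (q - 1)))
    (fun x hx => (Real.hasDerivAt_rpow_const
      (Or.inl (ne_of_gt (lt_of_lt_of_le (by linarith) hx.1)))).hasDerivWithinAt)
    (fun x hx => by
      have h1 : (0:ℝ) < x := lt_of_lt_of_le (by linarith) hx.1
      have h2 := rpow_bound_on_Icc (q-1) A hA hx
      rw [Real.norm_eq_abs, abs_mul, abs_of_nonneg (Real.rpow_nonneg h1.le _)]
      have : (0:ℝ) ≤ |q| := abs_nonneg q
      nlinarith)
    (convex_Icc _ _) ht hs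
  simpa [Real.norm_eq_abs] using key

lemma Gdiff {k : ℕ} (q : ℝ) (a b : Fin k → ℝ) (ha : a ≠ 0)
    (hd : euclNorm (a - b) ≤ euclNorm a / 2) :
    euclNorm (euclNorm a ^ q • a - euclNorm b ^ q • b) ≤
      ((1 + 2 * |q| * 2 ^ |q - 1|) * euclNorm a ^ q) * euclNorm (a - b) := by
  set A := euclNorm a with hA
  set B := euclNorm b with hB
  set d := euclNorm (a - b) with hdd
  have hApos : 0 < A := lt_of_le_of_ne (euclNorm_nonneg a) (fun h => ha (euclNorm_eq_zero.mp h.symm))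
  have hd0 : 0 ≤ d := euclNorm_nonneg _
  have hAB : |A - B| ≤ d := abs_euclNorm_sub_euclNorm_le a b
  have hB1 : A/2 ≤ B := by cases abs_le.mp hAB; linarith
  have hB2 : B ≤ 2*A := by cases abs_le.mp hAB; linarith
  have hdecomp : euclNorm a ^ q • a - euclNorm b ^ q • b
      = A ^ q • (a - b) + (A ^ q - B ^ q) • b := by
    rw [smul_sub, sub_smul]; abel
  rw [hdecomp]
  have h1 : euclNorm (A ^ q • (a - b)) = A ^ q * d := by
    rw [euclNorm_smul, abs_of_nonneg (Real.rpow_nonneg hApos.le _)]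
  have h2 : euclNorm ((A ^ q - B ^ q) • b) ≤ (2 * |q| * 2 ^ |q-1|) * A ^ q * d := by
    rw [euclNorm_smul]
    have hmemA : A ∈ Set.Icc (A/2) (2*A) := Set.mem_Icc.mpr ⟨by linarith, by linarith⟩
    have hmemB : B ∈ Set.Icc (A/2) (2*A) := Set.mem_Icc.mpr ⟨hB1, hB2⟩
    have hABd := rpow_diff_le q A hApos hmemA hmemB
    have hAA : A ^ (q-1) * A = A ^ q := by
      have h := Real.rpow_add hApos (q-1) 1
      rw [Real.rpow_one] at h
      rw [← h]; norm_num
    have hq : (0:ℝ) ≤ |q| := abs_nonneg q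
    have h2q : (0:ℝ) ≤ 2 ^ |q-1| := by positivity
    have hAq1 : (0:ℝ) ≤ A ^ (q-1) := Real.rpow_nonneg hApos.le _
    calc |A ^ q - B ^ q| * B ≤ ((|q| * (2 ^ |q-1| * A ^ (q-1))) * |A - B|) * B := by
          apply mul_le_mul_of_nonneg_right hABd (by linarith)
      _ ≤ ((|q| * (2 ^ |q-1| * A ^ (q-1))) * d) * (2*A) := by
          apply mul_le_mul (mul_le_mul_of_nonneg_left hAB (by positivity)) hB2
            (by linarith) (by positivity)
      _ = (2 * |q| * 2 ^ |q-1|) * (A ^ (q-1) * A) * d := by ring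
      _ = (2 * |q| * 2 ^ |q-1|) * A ^ q * d := by rw [hAA]
  calc euclNorm (A ^ q • (a - b) + (A ^ q - B ^ q) • b)
      ≤ euclNorm (A ^ q • (a - b)) + euclNorm ((A ^ q - B ^ q) • b) := euclNorm_add_le _ _
    _ ≤ A ^ q * d + (2 * |q| * 2 ^ |q-1|) * A ^ q * d := by rw [h1]; linarith
    _ = ((1 + 2 * |q| * 2 ^ |q-1|) * A ^ q) * d := by ring


lemma final_small_helper (K L V W P u M : ℝ) (hV : 0 ≤ V) (hW : 0 ≤ W) (hu : 0 ≤ u)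
    (hP : 0 ≤ P) (hM : 0 ≤ M) :
    K * L * V * (W * (P * u)) + V * (W * (P * u))
      ≤ (P * (K * L + 1) + 12 * M * P) * V * W * u := by
  have h : (0:ℝ) ≤ 12 * M * P * V * W * u := by positivity
  nlinarith [h]

lemma final_large_helper (J P W u L V : ℝ) (h1 : 1 ≤ 4 * L * V) (hW : 0 ≤ W) (hu : 0 ≤ u)
    (hP : 0 ≤ P) (hV : 0 ≤ V) (hJ : 0 ≤ J) (hL : 0 ≤ L) :
    (W * (P * u) + W * (P * u)) + (1/2) * (W * (P * u))
      ≤ (P * (J + 1) + 12 * L * P) * V * W * u := by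
  have h2 : (0:ℝ) ≤ P * (J + 1) * V * W * u := by positivity
  have h3 : (5/2 : ℝ) * (W * (P * u)) ≤ 10 * L * V * (W * (P * u)) := by
    nlinarith [mul_nonneg (mul_nonneg hW hP) hu]
  nlinarith [h2, h3, mul_nonneg (mul_nonneg (mul_nonneg (mul_nonneg hL hV) hW) hP) hu]

lemma half_dist_helper (d o V X L A : ℝ) (hA : 0 ≤ A) (h0 : d ≤ o * (V * X))
    (h1 : V * (o * X) ≤ V * (L * A)) (h2 : 0 ≤ (1 - 4 * L * V) * A) : d ≤ A / 2 := by
  nlinarith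

theorem stmt9 (m : ℕ) (hm : 1 ≤ m) (p Λ : ℝ) (hp : 1 < p) (hΛ : 1 ≤ Λ) :
    ∃ c : ℝ, 0 < c ∧
      ∀ M₀ : Matrix (Fin (m + 1)) (Fin (m + 1)) ℝ, M₀.IsSymm → M₀.PosDef →
      (∀ ξ : Fin (m + 1) → ℝ,
        Λ⁻¹ * specNorm M₀ * euclNorm ξ ≤ euclNorm (M₀.mulVec ξ) ∧
        euclNorm (M₀.mulVec ξ) ≤ specNorm M₀ * euclNorm ξ) →
      ∀ v : Fin m → ℝ, euclNorm v ≤ 1 / 2 →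
      ∀ ξ : Fin (m + 1) → ℝ,
        euclNorm (fun i =>
            euclNorm (M₀.mulVec ξ) ^ (p - 2) * (M₀ * M₀).mulVec ξ i -
            ((shearN m v)⁻¹ᵀ.mulVec (fun k =>
              euclNorm (M₀.mulVec ((shearN m v)⁻¹.mulVec ξ)) ^ (p - 2) *
                (M₀ * M₀).mulVec ((shearN m v)⁻¹.mulVec ξ) k)) i) ≤
          c * euclNorm v * specNorm M₀ ^ p *
            min (euclNorm ξ ^ (p - 1)) (euclNorm ((shearN m v)⁻¹.mulVec ξ) ^ (p - 1)) := by
  set q : ℝ := p - 2 with hqdef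
  set K : ℝ := 1 + 2 * |q| * 2 ^ |q - 1| with hKdef
  have hK1 : (1:ℝ) ≤ K := by
    have : (0:ℝ) ≤ 2 * |q| * 2 ^ |q - 1| := by positivity
    rw [hKdef]; linarith
  have hK0 : (0:ℝ) ≤ K := by linarith
  have hΛ0 : (0:ℝ) < Λ := by linarith
  have h2p : (1:ℝ) ≤ 2 ^ (p-1) := Real.one_le_rpow (by norm_num) (by linarith)
  have h2p0 : (0:ℝ) ≤ 2 ^ (p-1) := by linarith
  have hΛq : (1:ℝ) ≤ Λ ^ |q| := Real.one_le_rpow hΛ (abs_nonneg q)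
  refine ⟨2 ^ (p-1) * (K * Λ ^ |q| + 1) + 12 * Λ * 2 ^ (p-1), by positivity, ?_⟩
  intro M₀ hsym hpd hbound v hv ξ
  set c : ℝ := 2 ^ (p-1) * (K * Λ ^ |q| + 1) + 12 * Λ * 2 ^ (p-1) with hcdef
  have hc0 : (0:ℝ) ≤ c := by rw [hcdef]; positivity
  set ω : ℝ := specNorm M₀ with hωdef
  -- positivity of ω
  have hωpos : 0 < ω := by
    have h1 : (fun _ : Fin (m+1) => (1:ℝ)) ≠ 0 := by
      intro h; have := congrFun h 0; norm_num at this
    have h2 : M₀.mulVec (fun _ => 1) ≠ 0 := by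
      intro h
      have := hpd.dotProduct_mulVec_pos h1
      rw [h] at this
      simp [dotProduct] at this
    have h3 : 0 < euclNorm (M₀.mulVec (fun _ => 1)) :=
      lt_of_le_of_ne (euclNorm_nonneg _) (fun h => h2 (euclNorm_eq_zero.mp h.symm))
    have h4 := (hbound (fun _ => 1)).2
    have h5 : 0 ≤ euclNorm (fun _ : Fin (m+1) => (1:ℝ)) := euclNorm_nonneg _
    nlinarith
  have hωp0 : (0:ℝ) ≤ ω ^ p := Real.rpow_nonneg hωpos.le p
  -- notation
  rw [shearN_inv]
  set E : Matrix (Fin (m+1)) (Fin (m+1)) ℝ := Emat m v with hEdef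
  set η : Fin (m+1) → ℝ := (1 - E).mulVec ξ with hηdef
  have hη : η = ξ - E.mulVec ξ := by
    rw [hηdef, Matrix.sub_mulVec, Matrix.one_mulVec]
  -- the nonlinear map
  set G : (Fin (m+1) → ℝ) → (Fin (m+1) → ℝ) := fun y => euclNorm y ^ q • y with hGdef
  have hGapp : ∀ w : Fin (m+1) → ℝ, G w = euclNorm w ^ q • w := fun w => rfl
  have hF : ∀ (ζ : Fin (m+1) → ℝ) (i : Fin (m+1)),
      euclNorm (M₀.mulVec ζ) ^ q * (M₀ * M₀).mulVec ζ i
        = (M₀.mulVec (G (M₀.mulVec ζ))) i := by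
    intro ζ i
    rw [hGapp, Matrix.mulVec_smul, Matrix.mulVec_mulVec]
    simp [Pi.smul_apply, smul_eq_mul]
  -- norm of `G`
  have hGnorm : ∀ w : Fin (m+1) → ℝ, euclNorm (G w) = euclNorm w ^ q * euclNorm w := by
    intro w
    rw [hGapp, euclNorm_smul, abs_of_nonneg (Real.rpow_nonneg (euclNorm_nonneg w) q)]
  -- bound on `F ζ = M₀ (G (M₀ ζ))`
  have hFnorm : ∀ ζ : Fin (m+1) → ℝ,
      euclNorm (M₀.mulVec (G (M₀.mulVec ζ))) ≤ ω ^ p * euclNorm ζ ^ (p-1) := by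
    intro ζ
    have hup := (hbound (G (M₀.mulVec ζ))).2
    have hup2 := (hbound ζ).2
    calc euclNorm (M₀.mulVec (G (M₀.mulVec ζ))) ≤ ω * euclNorm (G (M₀.mulVec ζ)) := hup
      _ = ω * (euclNorm (M₀.mulVec ζ) ^ q * euclNorm (M₀.mulVec ζ)) := by rw [hGnorm]
      _ ≤ ω ^ p * euclNorm ζ ^ (p-1) := by
          rcases eq_or_ne (euclNorm (M₀.mulVec ζ)) 0 with h0 | h0
          · rw [h0, mul_zero, mul_zero]
            exact mul_nonneg hωp0 (Real.rpow_nonneg (euclNorm_nonneg _) _)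
          · have hwpos : 0 < euclNorm (M₀.mulVec ζ) :=
              lt_of_le_of_ne (euclNorm_nonneg _) (Ne.symm h0)
            have key : euclNorm (M₀.mulVec ζ) ^ q * euclNorm (M₀.mulVec ζ)
                = euclNorm (M₀.mulVec ζ) ^ (p-1) := by
              have h := Real.rpow_add hwpos q 1
              rw [Real.rpow_one] at h
              rw [← h, show q + 1 = p - 1 by rw [hqdef]; ring]
            rw [key]
            have hmon : euclNorm (M₀.mulVec ζ) ^ (p-1) ≤ (ω * euclNorm ζ) ^ (p-1) :=
              Real.rpow_le_rpow (euclNorm_nonneg _) hup2 (by linarith)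
            calc ω * euclNorm (M₀.mulVec ζ) ^ (p-1) ≤ ω * (ω * euclNorm ζ) ^ (p-1) :=
                  mul_le_mul_of_nonneg_left hmon hωpos.le
              _ = ω ^ p * euclNorm ζ ^ (p-1) := by
                  rw [Real.mul_rpow hωpos.le (euclNorm_nonneg _)]
                  have h := Real.rpow_add hωpos 1 (p-1)
                  rw [Real.rpow_one, show (1:ℝ) + (p-1) = p by ring] at h
                  rw [h]; ring
  -- comparability of `ξ` and `η`
  have hv0 : 0 ≤ euclNorm v := euclNorm_nonneg v
  have hEξ : euclNorm (E.mulVec ξ) ≤ euclNorm v * euclNorm ξ := euclNorm_Emat_mulVec_le m v ξ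
  have hξ0 : 0 ≤ euclNorm ξ := euclNorm_nonneg ξ
  have hη0 : 0 ≤ euclNorm η := euclNorm_nonneg η
  have hηξ : euclNorm η ≤ 2 * euclNorm ξ := by
    rw [hη]
    have := euclNorm_sub_le ξ (E.mulVec ξ)
    nlinarith
  have hξη : euclNorm ξ ≤ 2 * euclNorm η := by
    have h1 : ξ = η + E.mulVec ξ := by rw [hη]; abel
    have h2 : euclNorm ξ ≤ euclNorm η + euclNorm (E.mulVec ξ) := by
      conv_lhs => rw [h1]
      exact euclNorm_add_le _ _
    nlinarith
  -- the min
  set μ : ℝ := min (euclNorm ξ ^ (p-1)) (euclNorm η ^ (p-1)) with hμdef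
  have hμ0 : 0 ≤ μ := le_min (Real.rpow_nonneg hξ0 _) (Real.rpow_nonneg hη0 _)
  have hμ1 : euclNorm ξ ^ (p-1) ≤ 2 ^ (p-1) * μ := by
    rcases min_cases (euclNorm ξ ^ (p-1)) (euclNorm η ^ (p-1)) with ⟨h, -⟩ | ⟨h, -⟩
    · rw [hμdef, h]; exact le_mul_of_one_le_left (Real.rpow_nonneg hξ0 _) h2p
    · rw [hμdef, h]
      calc euclNorm ξ ^ (p-1) ≤ (2 * euclNorm η) ^ (p-1) :=
            Real.rpow_le_rpow hξ0 hξη (by linarith)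
        _ = 2 ^ (p-1) * euclNorm η ^ (p-1) := Real.mul_rpow (by norm_num) hη0
  have hμ2 : euclNorm η ^ (p-1) ≤ 2 ^ (p-1) * μ := by
    rcases min_cases (euclNorm ξ ^ (p-1)) (euclNorm η ^ (p-1)) with ⟨h, -⟩ | ⟨h, -⟩
    · rw [hμdef, h]
      calc euclNorm η ^ (p-1) ≤ (2 * euclNorm ξ) ^ (p-1) :=
            Real.rpow_le_rpow hη0 hηξ (by linarith)
        _ = 2 ^ (p-1) * euclNorm ξ ^ (p-1) := Real.mul_rpow (by norm_num) hξ0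
    · rw [hμdef, h]; exact le_mul_of_one_le_left (Real.rpow_nonneg hη0 _) h2p
  -- decomposition
  set Fξ : Fin (m+1) → ℝ := M₀.mulVec (G (M₀.mulVec ξ)) with hFξdef
  set Fη : Fin (m+1) → ℝ := M₀.mulVec (G (M₀.mulVec η)) with hFηdef
  have hdecomp : (fun i =>
        euclNorm (M₀.mulVec ξ) ^ q * (M₀ * M₀).mulVec ξ i -
          ((1 - E)ᵀ.mulVec (fun k =>
            euclNorm (M₀.mulVec η) ^ q * (M₀ * M₀).mulVec η k)) i)
      = (Fξ - Fη) + (Eᵀ.mulVec Fη) := by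
    have hFη' : (fun k => euclNorm (M₀.mulVec η) ^ q * (M₀ * M₀).mulVec η k) = Fη := by
      rw [hFηdef]; exact funext (hF η)
    rw [hFη']
    have h1 : (1 - E)ᵀ.mulVec Fη = Fη - Eᵀ.mulVec Fη := by
      rw [Matrix.transpose_sub, Matrix.transpose_one, Matrix.sub_mulVec, Matrix.one_mulVec]
    funext i
    simp only [h1, Pi.add_apply, Pi.sub_apply]
    rw [hFξdef, hF ξ i]
    ring
  rw [hdecomp]
  have htri : euclNorm ((Fξ - Fη) + (Eᵀ.mulVec Fη)) ≤ euclNorm (Fξ - Fη) + euclNorm (Eᵀ.mulVec Fη) :=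
    euclNorm_add_le _ _
  have hBterm : euclNorm (Eᵀ.mulVec Fη) ≤ euclNorm v * (ω ^ p * (2 ^ (p-1) * μ)) := by
    calc euclNorm (Eᵀ.mulVec Fη) ≤ euclNorm v * euclNorm Fη := euclNorm_EmatT_mulVec_le m v Fη
      _ ≤ euclNorm v * (ω ^ p * euclNorm η ^ (p-1)) :=
          mul_le_mul_of_nonneg_left (hFnorm η) hv0
      _ ≤ euclNorm v * (ω ^ p * (2 ^ (p-1) * μ)) :=
          mul_le_mul_of_nonneg_left (mul_le_mul_of_nonneg_left hμ2 hωp0) hv0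
  rcases lt_or_ge (4 * Λ * euclNorm v) 1 with hcase | hcase
  · -- small v
    rcases eq_or_ne ξ 0 with rfl | hξne
    · have hG0 : G (0 : Fin (m+1) → ℝ) = 0 := by rw [hGapp, smul_zero]
      have hη00 : η = 0 := by rw [hηdef, Matrix.mulVec_zero]
      have hFξ0 : Fξ = 0 := by
        rw [hFξdef, Matrix.mulVec_zero, hG0, Matrix.mulVec_zero]
      have hFη0 : Fη = 0 := by
        rw [hFηdef, hη00, Matrix.mulVec_zero, hG0, Matrix.mulVec_zero]
      have hz : ((0:Fin (m+1) → ℝ) - 0) + (0:Fin (m+1) → ℝ) = 0 := by simp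
      rw [hFξ0, hFη0, Matrix.mulVec_zero, hz, euclNorm_eq_zero.mpr rfl]
      exact mul_nonneg (mul_nonneg (mul_nonneg hc0 hv0) hωp0) hμ0
    · -- main estimate, small v and nonzero ξ
      have hξpos : 0 < euclNorm ξ :=
        lt_of_le_of_ne hξ0 (fun h => hξne (euclNorm_eq_zero.mp h.symm))
      set a : Fin (m+1) → ℝ := M₀.mulVec ξ with hadef
      set b : Fin (m+1) → ℝ := M₀.mulVec η with hbdef
      have hlow := (hbound ξ).1
      have hup := (hbound ξ).2
      have hapos : 0 < euclNorm a := by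
        have : 0 < Λ⁻¹ * ω * euclNorm ξ := by positivity
        calc (0:ℝ) < Λ⁻¹ * ω * euclNorm ξ := this
          _ ≤ euclNorm a := hlow
      have hane : a ≠ 0 := by
        intro h
        rw [h, euclNorm_eq_zero.mpr rfl] at hapos
        exact lt_irrefl 0 hapos
      have hab : a - b = M₀.mulVec (E.mulVec ξ) := by
        have hxe : ξ - η = E.mulVec ξ := by rw [hη]; abel
        rw [hadef, hbdef, ← Matrix.mulVec_sub, hxe]
      have habnorm : euclNorm (a - b) ≤ ω * (euclNorm v * euclNorm ξ) := by
        rw [hab]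
        calc euclNorm (M₀.mulVec (E.mulVec ξ)) ≤ ω * euclNorm (E.mulVec ξ) :=
              (hbound (E.mulVec ξ)).2
          _ ≤ ω * (euclNorm v * euclNorm ξ) := mul_le_mul_of_nonneg_left hEξ hωpos.le
      have hξa : ω * euclNorm ξ ≤ Λ * euclNorm a := by
        have h := mul_le_mul_of_nonneg_left hlow hΛ0.le
        rw [← mul_assoc, ← mul_assoc, mul_inv_cancel₀ hΛ0.ne', one_mul] at h
        exact h
      have hd2 : euclNorm (a - b) ≤ euclNorm a / 2 := by
        have h1 : euclNorm v * (ω * euclNorm ξ) ≤ euclNorm v * (Λ * euclNorm a) :=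
          mul_le_mul_of_nonneg_left hξa hv0
        have h2 : (0:ℝ) ≤ (1 - 4*Λ*euclNorm v) * euclNorm a := mul_nonneg (by linarith) hapos.le
        exact half_dist_helper _ ω (euclNorm v) (euclNorm ξ) Λ (euclNorm a) hapos.le habnorm h1 h2
      have hGd : euclNorm (G a - G b) ≤ (K * euclNorm a ^ q) * euclNorm (a - b) := by
        rw [hGapp, hGapp, hKdef]
        exact Gdiff q a b hane hd2
      have heq : Fξ - Fη = M₀.mulVec (G a - G b) := by
        rw [Matrix.mulVec_sub, hFξdef, hFηdef]
      -- rpow bookkeeping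
      have hωp : ω ^ q * ω * ω = ω ^ p := by
        have h1 := Real.rpow_add hωpos q 1
        have h2 := Real.rpow_add hωpos (q+1) 1
        rw [Real.rpow_one] at h1 h2
        rw [← h1, ← h2, show q + 1 + 1 = p by rw [hqdef]; ring]
      have hξp : euclNorm ξ ^ q * euclNorm ξ = euclNorm ξ ^ (p-1) := by
        have h1 := Real.rpow_add hξpos q 1
        rw [Real.rpow_one] at h1
        rw [← h1, show q + 1 = p - 1 by rw [hqdef]; ring]
      have haq : euclNorm a ^ q ≤ Λ ^ |q| * (ω ^ q * euclNorm ξ ^ q) := by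
        have hmr : (ω * euclNorm ξ) ^ q = ω ^ q * euclNorm ξ ^ q :=
          Real.mul_rpow hωpos.le hξ0
        rcases le_or_gt 0 q with h | h
        · have h1 : euclNorm a ^ q ≤ (ω * euclNorm ξ) ^ q :=
            Real.rpow_le_rpow (euclNorm_nonneg a) hup h
          rw [hmr] at h1
          calc euclNorm a ^ q ≤ ω ^ q * euclNorm ξ ^ q := h1
            _ ≤ Λ ^ |q| * (ω ^ q * euclNorm ξ ^ q) :=
                le_mul_of_one_le_left
                  (mul_nonneg (Real.rpow_nonneg hωpos.le q) (Real.rpow_nonneg hξ0 q)) hΛq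
        · have hpos : 0 < Λ⁻¹ * ω * euclNorm ξ := by positivity
          have h1 : euclNorm a ^ q ≤ (Λ⁻¹ * ω * euclNorm ξ) ^ q :=
            Real.rpow_le_rpow_of_nonpos hpos hlow h.le
          have h2 : (Λ⁻¹ * ω * euclNorm ξ) ^ q = Λ ^ (-q) * (ω ^ q * euclNorm ξ ^ q) := by
            rw [mul_assoc, Real.mul_rpow (by positivity) (by positivity),
              Real.inv_rpow hΛ0.le, ← Real.rpow_neg hΛ0.le, hmr]
          rw [abs_of_neg h]
          rw [h2] at h1
          exact h1
      have hmain : euclNorm (Fξ - Fη) ≤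
          (K * Λ ^ |q|) * euclNorm v * (ω ^ p * (2 ^ (p-1) * μ)) := by
        calc euclNorm (Fξ - Fη) ≤ ω * euclNorm (G a - G b) := by
              rw [heq]; exact (hbound (G a - G b)).2
          _ ≤ ω * ((K * euclNorm a ^ q) * euclNorm (a - b)) :=
              mul_le_mul_of_nonneg_left hGd hωpos.le
          _ ≤ ω * ((K * (Λ ^ |q| * (ω ^ q * euclNorm ξ ^ q))) * (ω * (euclNorm v * euclNorm ξ))) := by
              apply mul_le_mul_of_nonneg_left _ hωpos.le
              apply mul_le_mul (mul_le_mul_of_nonneg_left haq hK0) habnorm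
                (euclNorm_nonneg _) (by positivity)
          _ = (K * Λ ^ |q|) * euclNorm v * ((ω ^ q * ω * ω) * (euclNorm ξ ^ q * euclNorm ξ)) := by
              ring
          _ = (K * Λ ^ |q|) * euclNorm v * (ω ^ p * euclNorm ξ ^ (p-1)) := by rw [hωp, hξp]
          _ ≤ (K * Λ ^ |q|) * euclNorm v * (ω ^ p * (2 ^ (p-1) * μ)) := by
              apply mul_le_mul_of_nonneg_left (mul_le_mul_of_nonneg_left hμ1 hωp0)
              positivity
      calc euclNorm ((Fξ - Fη) + (Eᵀ.mulVec Fη))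
          ≤ euclNorm (Fξ - Fη) + euclNorm (Eᵀ.mulVec Fη) := htri
        _ ≤ (K * Λ ^ |q|) * euclNorm v * (ω ^ p * (2 ^ (p-1) * μ))
            + euclNorm v * (ω ^ p * (2 ^ (p-1) * μ)) := add_le_add hmain hBterm
        _ ≤ c * euclNorm v * ω ^ p * μ := by
            rw [hcdef]
            exact final_small_helper K (Λ ^ |q|) (euclNorm v) (ω ^ p) (2 ^ (p-1)) μ Λ
              hv0 hωp0 hμ0 h2p0 hΛ0.le
  · -- large v
    have hFξb : euclNorm Fξ ≤ ω ^ p * (2 ^ (p-1) * μ) := by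
      calc euclNorm Fξ ≤ ω ^ p * euclNorm ξ ^ (p-1) := hFnorm ξ
        _ ≤ ω ^ p * (2 ^ (p-1) * μ) := mul_le_mul_of_nonneg_left hμ1 hωp0
    have hFηb : euclNorm Fη ≤ ω ^ p * (2 ^ (p-1) * μ) := by
      calc euclNorm Fη ≤ ω ^ p * euclNorm η ^ (p-1) := hFnorm η
        _ ≤ ω ^ p * (2 ^ (p-1) * μ) := mul_le_mul_of_nonneg_left hμ2 hωp0
    have hsub : euclNorm (Fξ - Fη) ≤ euclNorm Fξ + euclNorm Fη := euclNorm_sub_le _ _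
    have hB2 : euclNorm (Eᵀ.mulVec Fη) ≤ (1/2) * (ω ^ p * (2 ^ (p-1) * μ)) := by
      calc euclNorm (Eᵀ.mulVec Fη) ≤ euclNorm v * euclNorm Fη := euclNorm_EmatT_mulVec_le m v Fη
        _ ≤ (1/2) * (ω ^ p * (2 ^ (p-1) * μ)) := by
            apply mul_le_mul hv hFηb (euclNorm_nonneg _) (by norm_num)
    calc euclNorm ((Fξ - Fη) + (Eᵀ.mulVec Fη))
        ≤ euclNorm (Fξ - Fη) + euclNorm (Eᵀ.mulVec Fη) := htri
      _ ≤ (ω ^ p * (2 ^ (p-1) * μ) + ω ^ p * (2 ^ (p-1) * μ))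
          + (1/2) * (ω ^ p * (2 ^ (p-1) * μ)) := by
          have := le_trans hsub (add_le_add hFξb hFηb)
          linarith [hB2]
      _ ≤ c * euclNorm v * ω ^ p * μ := by
          rw [hcdef]
          exact final_large_helper (K * Λ ^ |q|) (2 ^ (p-1)) (ω ^ p) μ Λ (euclNorm v)
            hcase hωp0 hμ0 h2p0 hv0
            (mul_nonneg hK0 (le_trans zero_le_one hΛq)) hΛ0.le
end

section
/- Let ε ∈ (0,1), set α := (π/2)/(π/2 + arctan ε), and let Ω := {x = (x₁,x₂) ∈ ℝ² : x₁² + x₂² < 1 and x₂ > −ε|x₁|}. Identify ℝ² with ℂ via z = x₁ + i x₂ and define u : ℝ² → ℝ by u(x) := Re( (−i z)^α ), using the principal complex power (with 0^α := 0). Then u is twice continuously differentiable on Ω with vanishing Laplacian, ∂²u/∂x₁² + ∂²u/∂x₂² = 0 on Ω (i.e. u is harmonic on Ω), and u(x) = 0 for every x with x₁² + x₂² ≤ 1 and x₂ = −ε|x₁|. -/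
open Real

private lemma hasDerivAt_re_comp {h : ℝ → ℂ} {h' : ℂ} {t : ℝ} (H : HasDerivAt h h' t) :
    HasDerivAt (fun s => (h s).re) h'.re t :=
  Complex.reCLM.hasFDerivAt.comp_hasDerivAt t H

private noncomputable def Fc (α : ℝ) : ℂ → ℂ := fun w => (-Complex.I * w) ^ (α : ℂ)

private noncomputable def F1 (α : ℝ) : ℂ → ℂ :=
  fun w => (α : ℂ) * (-Complex.I * w) ^ ((α : ℂ) - 1) * (-Complex.I)

private noncomputable def F2 (α : ℝ) : ℂ → ℂ :=
  fun w => (α : ℂ) * (((α : ℂ) - 1) * (-Complex.I * w) ^ ((α : ℂ) - 1 - 1) * (-Complex.I))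
    * (-Complex.I)

private lemma hmulI (z : ℂ) : HasDerivAt (fun w : ℂ => -Complex.I * w) (-Complex.I) z := by
  simpa using (hasDerivAt_id z).const_mul (-Complex.I)

private lemma hasDerivAt_Fc {α : ℝ} {z : ℂ} (hz : -Complex.I * z ∈ Complex.slitPlane) :
    HasDerivAt (Fc α) (F1 α z) z :=
  (hmulI z).cpow_const hz

private lemma hasDerivAt_F1 {α : ℝ} {z : ℂ} (hz : -Complex.I * z ∈ Complex.slitPlane) :
    HasDerivAt (F1 α) (F2 α z) z :=
  (((hmulI z).cpow_const hz).const_mul (α : ℂ)).mul_const (-Complex.I)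

private lemma hx1_lemma {α b : ℝ} {t : ℝ}
    (h : -Complex.I * ((t : ℂ) + (b : ℂ) * Complex.I) ∈ Complex.slitPlane) :
    HasDerivAt (fun s : ℝ => (Fc α ((s : ℂ) + (b : ℂ) * Complex.I)).re)
      ((F1 α ((t : ℂ) + (b : ℂ) * Complex.I)).re) t := by
  have hin : HasDerivAt (fun w : ℂ => w + (b : ℂ) * Complex.I) 1 (t : ℂ) :=
    (hasDerivAt_id _).add_const _
  have h1 : HasDerivAt (fun w : ℂ => Fc α (w + (b : ℂ) * Complex.I))
      (F1 α ((t : ℂ) + (b : ℂ) * Complex.I)) (t : ℂ) := by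
    simpa [Function.comp_def] using (hasDerivAt_Fc h).comp (t : ℂ) hin
  exact hasDerivAt_re_comp h1.comp_ofReal

private lemma hx2_lemma {α b : ℝ} {t : ℝ}
    (h : -Complex.I * ((t : ℂ) + (b : ℂ) * Complex.I) ∈ Complex.slitPlane) :
    HasDerivAt (fun s : ℝ => (F1 α ((s : ℂ) + (b : ℂ) * Complex.I)).re)
      ((F2 α ((t : ℂ) + (b : ℂ) * Complex.I)).re) t := by
  have hin : HasDerivAt (fun w : ℂ => w + (b : ℂ) * Complex.I) 1 (t : ℂ) :=
    (hasDerivAt_id _).add_const _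
  have h1 : HasDerivAt (fun w : ℂ => F1 α (w + (b : ℂ) * Complex.I))
      (F2 α ((t : ℂ) + (b : ℂ) * Complex.I)) (t : ℂ) := by
    simpa [Function.comp_def] using (hasDerivAt_F1 h).comp (t : ℂ) hin
  exact hasDerivAt_re_comp h1.comp_ofReal

private lemma hy1_lemma {α a : ℝ} {t : ℝ}
    (h : -Complex.I * ((a : ℂ) + (t : ℂ) * Complex.I) ∈ Complex.slitPlane) :
    HasDerivAt (fun s : ℝ => (Fc α ((a : ℂ) + (s : ℂ) * Complex.I)).re)
      ((F1 α ((a : ℂ) + (t : ℂ) * Complex.I) * Complex.I).re) t := by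
  have hin : HasDerivAt (fun w : ℂ => (a : ℂ) + w * Complex.I) Complex.I (t : ℂ) := by
    simpa using ((hasDerivAt_id (t : ℂ)).mul_const Complex.I).const_add (a : ℂ)
  have h1 : HasDerivAt (fun w : ℂ => Fc α ((a : ℂ) + w * Complex.I))
      (F1 α ((a : ℂ) + (t : ℂ) * Complex.I) * Complex.I) (t : ℂ) := by
    simpa [Function.comp_def] using (hasDerivAt_Fc h).comp (t : ℂ) hin
  exact hasDerivAt_re_comp h1.comp_ofReal

private lemma hy2_lemma {α a : ℝ} {t : ℝ}
    (h : -Complex.I * ((a : ℂ) + (t : ℂ) * Complex.I) ∈ Complex.slitPlane) :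
    HasDerivAt (fun s : ℝ => (F1 α ((a : ℂ) + (s : ℂ) * Complex.I) * Complex.I).re)
      ((F2 α ((a : ℂ) + (t : ℂ) * Complex.I) * Complex.I * Complex.I).re) t := by
  have hin : HasDerivAt (fun w : ℂ => (a : ℂ) + w * Complex.I) Complex.I (t : ℂ) := by
    simpa using ((hasDerivAt_id (t : ℂ)).mul_const Complex.I).const_add (a : ℂ)
  have h0 : HasDerivAt (fun w : ℂ => F1 α ((a : ℂ) + w * Complex.I))
      (F2 α ((a : ℂ) + (t : ℂ) * Complex.I) * Complex.I) (t : ℂ) := by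
    simpa [Function.comp_def] using (hasDerivAt_F1 h).comp (t : ℂ) hin
  have h1 := h0.mul_const Complex.I
  exact hasDerivAt_re_comp h1.comp_ofReal

private lemma arcsin_aux {ε : ℝ} (hε0 : 0 < ε) :
    Real.arcsin (1 / Real.sqrt (1 + ε ^ 2)) = π / 2 - arctan ε := by
  rw [← arctan_inv_of_pos hε0, arctan_eq_arcsin]
  congr 1
  have h1 : (1 : ℝ) + (ε⁻¹) ^ 2 = (1 + ε ^ 2) / ε ^ 2 := by
    field_simp
    ring
  have h2 : Real.sqrt ((1 + ε ^ 2) / ε ^ 2) = Real.sqrt (1 + ε ^ 2) / ε := by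
    rw [Real.sqrt_div (by positivity), Real.sqrt_sq hε0.le]
  rw [h1, h2]
  have hsq : (0:ℝ) < Real.sqrt (1 + ε ^ 2) := Real.sqrt_pos.mpr (by positivity)
  field_simp

/-- Let `ε ∈ (0,1)`, `α := (π/2)/(π/2 + arctan ε)` and
`Ω := {x ∈ ℝ² : |x| < 1, x₂ > -ε|x₁|}`.  Identifying `ℝ²` with `ℂ` via `z = x₁ + i x₂` and
setting `u(x) := Re((-i z)^α)` (principal complex power, `0^α := 0`), the function `u` is
twice continuously differentiable on `Ω` with vanishing Laplacian
`∂²u/∂x₁² + ∂²u/∂x₂² = 0` on `Ω` (i.e. `u` is harmonic on `Ω`), and `u` vanishes on the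
rays `x₂ = -ε|x₁|` inside the closed unit disc. -/
theorem stmt15 (ε : ℝ) (hε0 : 0 < ε) (hε1 : ε < 1)
    (α : ℝ) (hα : α = (π / 2) / (π / 2 + arctan ε))
    (Ω : Set (ℝ × ℝ)) (hΩ : Ω = {x : ℝ × ℝ | x.1 ^ 2 + x.2 ^ 2 < 1 ∧ -ε * |x.1| < x.2})
    (u : ℝ × ℝ → ℝ)
    (hu : u = fun x : ℝ × ℝ =>
      ((-Complex.I * ((x.1 : ℂ) + (x.2 : ℂ) * Complex.I)) ^ (α : ℂ)).re) :
    ContDiffOn ℝ 2 u Ω ∧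
    (∀ x ∈ Ω,
      deriv (fun t => deriv (fun s => u (s, x.2)) t) x.1 +
        deriv (fun t => deriv (fun s => u (x.1, s)) t) x.2 = 0) ∧
    (∀ x : ℝ × ℝ, x.1 ^ 2 + x.2 ^ 2 ≤ 1 → x.2 = -ε * |x.1| → u x = 0) := by
  have harct : 0 < arctan ε := by
    rw [← Real.arctan_zero]
    exact Real.arctan_strictMono hε0
  have hA : 0 < π / 2 + arctan ε := by
    have := pi_pos
    linarith
  have hα0 : α ≠ 0 := by
    rw [hα]
    positivity
  -- membership of Ω in the slit-plane preimage
  have hmem : ∀ x ∈ Ω,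
      -Complex.I * ((x.1 : ℂ) + (x.2 : ℂ) * Complex.I) ∈ Complex.slitPlane := by
    intro x hx
    rw [hΩ] at hx
    obtain ⟨hx1, hx2⟩ := hx
    rw [Complex.mem_slitPlane_iff]
    by_cases h : x.1 = 0
    · left
      have hpos : (0:ℝ) < x.2 := by simpa [h] using hx2
      simpa [Complex.add_re, Complex.mul_re, Complex.add_im, Complex.mul_im] using hpos
    · right
      simpa [Complex.add_re, Complex.mul_re, Complex.add_im, Complex.mul_im] using h
  refine ⟨?_, ?_, ?_⟩
  · -- smoothness
    set U : Set ℂ := (fun w => -Complex.I * w) ⁻¹' Complex.slitPlane with hU_def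
    have hUopen : IsOpen U := Complex.isOpen_slitPlane.preimage (by fun_prop)
    have hFdiff : DifferentiableOn ℂ (Fc α) U := fun z hz =>
      (hasDerivAt_Fc hz).differentiableAt.differentiableWithinAt
    have hFcd : ContDiffOn ℂ 2 (Fc α) U := hFdiff.contDiffOn hUopen
    have he : ContDiff ℝ 2 (fun x : ℝ × ℝ => (x.1 : ℂ) + (x.2 : ℂ) * Complex.I) :=
      (Complex.ofRealCLM.contDiff.comp contDiff_fst).add
        ((Complex.ofRealCLM.contDiff.comp contDiff_snd).mul contDiff_const)
    have hmaps : Set.MapsTo (fun x : ℝ × ℝ => (x.1 : ℂ) + (x.2 : ℂ) * Complex.I) Ω U :=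
      fun x hx => hmem x hx
    have hcomp : ContDiffOn ℝ 2 (fun x : ℝ × ℝ => Fc α ((x.1 : ℂ) + (x.2 : ℂ) * Complex.I)) Ω :=
      (hFcd.restrict_scalars ℝ).comp he.contDiffOn hmaps
    rw [hu]
    exact Complex.reCLM.contDiff.comp_contDiffOn hcomp
  · -- harmonicity
    intro x hx
    have hzU : -Complex.I * ((x.1 : ℂ) + (x.2 : ℂ) * Complex.I) ∈ Complex.slitPlane :=
      hmem x hx
    -- x-direction
    have hUx : IsOpen {t : ℝ | -Complex.I * ((t : ℂ) + (x.2 : ℂ) * Complex.I)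
        ∈ Complex.slitPlane} := Complex.isOpen_slitPlane.preimage (by fun_prop)
    have hfun_x : (fun s => u (s, x.2))
        = fun s : ℝ => (Fc α ((s : ℂ) + (x.2 : ℂ) * Complex.I)).re := by
      rw [hu]; rfl
    have hinner_x : (fun t => deriv (fun s => u (s, x.2)) t)
        =ᶠ[nhds x.1] (fun t => (F1 α ((t : ℂ) + (x.2 : ℂ) * Complex.I)).re) := by
      filter_upwards [hUx.mem_nhds hzU] with t ht
      rw [hfun_x]
      exact (hx1_lemma ht).deriv
    have hx_eq : deriv (fun t => deriv (fun s => u (s, x.2)) t) x.1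
        = (F2 α ((x.1 : ℂ) + (x.2 : ℂ) * Complex.I)).re :=
      ((hx2_lemma hzU).congr_of_eventuallyEq hinner_x).deriv
    -- y-direction
    have hUy : IsOpen {t : ℝ | -Complex.I * ((x.1 : ℂ) + (t : ℂ) * Complex.I)
        ∈ Complex.slitPlane} := Complex.isOpen_slitPlane.preimage (by fun_prop)
    have hfun_y : (fun s => u (x.1, s))
        = fun s : ℝ => (Fc α ((x.1 : ℂ) + (s : ℂ) * Complex.I)).re := by
      rw [hu]; rfl
    have hinner_y : (fun t => deriv (fun s => u (x.1, s)) t)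
        =ᶠ[nhds x.2] (fun t => (F1 α ((x.1 : ℂ) + (t : ℂ) * Complex.I) * Complex.I).re) := by
      filter_upwards [hUy.mem_nhds hzU] with t ht
      rw [hfun_y]
      exact (hy1_lemma ht).deriv
    have hy_eq : deriv (fun t => deriv (fun s => u (x.1, s)) t) x.2
        = (F2 α ((x.1 : ℂ) + (x.2 : ℂ) * Complex.I) * Complex.I * Complex.I).re :=
      ((hy2_lemma hzU).congr_of_eventuallyEq hinner_y).deriv
    rw [hx_eq, hy_eq]
    have hII : F2 α ((x.1 : ℂ) + (x.2 : ℂ) * Complex.I) * Complex.I * Complex.I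
        = -F2 α ((x.1 : ℂ) + (x.2 : ℂ) * Complex.I) := by
      rw [mul_assoc, Complex.I_mul_I, mul_neg_one]
    rw [hII, Complex.neg_re]
    ring
  · -- boundary vanishing
    intro x _ hx2
    rw [hu]
    simp only
    by_cases h0 : x.1 = 0
    · have hx20 : x.2 = 0 := by simp [hx2, h0]
      rw [h0, hx20]
      simp [Complex.zero_cpow (by exact_mod_cast hα0 : (α : ℂ) ≠ 0)]
    · set w : ℂ := -Complex.I * ((x.1 : ℂ) + (x.2 : ℂ) * Complex.I) with hw_def
      have hwre : w.re = x.2 := by simp [hw_def, Complex.mul_re, Complex.add_re, Complex.add_im]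
      have hwim : w.im = -x.1 := by simp [hw_def, Complex.mul_im, Complex.add_re, Complex.add_im]
      have habs0 : 0 < |x.1| := abs_pos.mpr h0
      have hwre_neg : w.re < 0 := by
        rw [hwre, hx2]
        nlinarith
      have hw0 : w ≠ 0 := fun h => by simp [h] at hwre_neg
      have hsq : (0:ℝ) < Real.sqrt (1 + ε ^ 2) := Real.sqrt_pos.mpr (by positivity)
      have habs : ‖w‖ = |x.1| * Real.sqrt (1 + ε ^ 2) := by
        rw [Complex.norm_def, Complex.normSq_apply, hwre, hwim, hx2]
        have h1 : -ε * |x.1| * (-ε * |x.1|) + -x.1 * -x.1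
            = (|x.1| * Real.sqrt (1 + ε ^ 2)) ^ 2 := by
          rw [mul_pow, Real.sq_sqrt (by positivity : (0:ℝ) ≤ 1 + ε ^ 2)]
          have h2 := abs_mul_abs_self x.1
          nlinarith [h2]
        rw [h1, Real.sqrt_sq (by positivity)]
      have harg : Complex.arg w = π / 2 + arctan ε ∨ Complex.arg w = -(π / 2 + arctan ε) := by
        rcases lt_or_gt_of_ne h0 with hneg | hpos
        · -- x.1 < 0 : im = -x.1 > 0
          left
          have him : 0 ≤ w.im := by rw [hwim]; linarith
          rw [Complex.arg_of_re_neg_of_im_nonneg hwre_neg him]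
          have hnegw : (-w).im = x.1 := by rw [Complex.neg_im, hwim]; ring
          rw [hnegw, habs]
          have habs1 : |x.1| = -x.1 := abs_of_neg hneg
          have hratio : x.1 / (|x.1| * Real.sqrt (1 + ε ^ 2))
              = -(1 / Real.sqrt (1 + ε ^ 2)) := by
            rw [habs1]
            field_simp
          rw [hratio, Real.arcsin_neg, arcsin_aux hε0]
          ring
        · -- x.1 > 0 : im = -x.1 < 0
          right
          have him : w.im < 0 := by rw [hwim]; linarith
          rw [Complex.arg_of_re_neg_of_im_neg hwre_neg him]
          have hnegw : (-w).im = x.1 := by rw [Complex.neg_im, hwim]; ring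
          rw [hnegw, habs]
          have habs1 : |x.1| = x.1 := abs_of_pos hpos
          have hratio : x.1 / (|x.1| * Real.sqrt (1 + ε ^ 2))
              = 1 / Real.sqrt (1 + ε ^ 2) := by
            rw [habs1]
            field_simp
          rw [hratio, arcsin_aux hε0]
          ring
      have hcos : Real.cos (α * Complex.arg w) = 0 := by
        have hαA : α * (π / 2 + arctan ε) = π / 2 := by
          rw [hα, div_mul_cancel₀ _ (ne_of_gt hA)]
        rcases harg with h | h
        · rw [h, hαA, Real.cos_pi_div_two]
        · rw [h, mul_neg, hαA, Real.cos_neg, Real.cos_pi_div_two]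
      rw [Complex.cpow_def_of_ne_zero hw0, Complex.exp_re]
      have him : (Complex.log w * (α : ℂ)).im = α * Complex.arg w := by
        simp [Complex.log_im, Complex.mul_im, Complex.ofReal_re, Complex.ofReal_im]
        ring
      rw [him, hcos, mul_zero]
end

section
/- Let ε ∈ (0,1), set α := (π/2)/(π/2 + arctan ε), and let Ω := {x = (x₁,x₂) ∈ ℝ² : x₁² + x₂² < 1 and x₂ > −ε|x₁|}. Define u : ℝ² → ℝ by u(x) := Re( (−i (x₁ + i x₂))^α ), using the principal complex power (with 0^α := 0). Then for every x ∈ Ω, u is (Fréchet) differentiable at x and the Euclidean norm of its gradient satisfies ‖∇u(x)‖ = α (x₁² + x₂²)^{(α−1)/2}, i.e. ‖∇u(x)‖ = α ‖x‖^{α−1}. -/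
open Real

noncomputable def Lmap : EuclideanSpace ℝ (Fin 2) →L[ℝ] ℂ :=
  Complex.ofRealCLM.comp (EuclideanSpace.proj 1) -
    Complex.I • Complex.ofRealCLM.comp (EuclideanSpace.proj 0)

lemma Lmap_apply (v : EuclideanSpace ℝ (Fin 2)) :
    Lmap v = -Complex.I * ((v 0 : ℂ) + (v 1 : ℂ) * Complex.I) := by
  simp [Lmap, sub_eq_add_neg]
  linear_combination ((v 1 : ℂ)) * Complex.I_sq

lemma norm_Lmap (v : EuclideanSpace ℝ (Fin 2)) : ‖Lmap v‖ = ‖v‖ := by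
  rw [Lmap_apply, EuclideanSpace.norm_eq]
  rw [show -Complex.I * ((v 0 : ℂ) + (v 1 : ℂ) * Complex.I)
      = (v 1 : ℂ) + (-(v 0) : ℝ) * Complex.I by
    push_cast; linear_combination (-(v 1 : ℂ)) * Complex.I_sq]
  rw [Complex.norm_add_mul_I]
  simp [Fin.sum_univ_two, sq_abs, add_comm]

theorem stmt16 (ε : ℝ) (hε0 : 0 < ε) (hε1 : ε < 1)
    (α : ℝ) (hα : α = (π / 2) / (π / 2 + arctan ε))
    (Ω : Set (EuclideanSpace ℝ (Fin 2)))
    (hΩ : Ω = {x : EuclideanSpace ℝ (Fin 2) |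
      (x 0) ^ 2 + (x 1) ^ 2 < 1 ∧ -ε * |x 0| < x 1})
    (u : EuclideanSpace ℝ (Fin 2) → ℝ)
    (hu : u = fun x : EuclideanSpace ℝ (Fin 2) =>
      ((-Complex.I * ((x 0 : ℂ) + (x 1 : ℂ) * Complex.I)) ^ (α : ℂ)).re) :
    ∀ x ∈ Ω,
      DifferentiableAt ℝ u x ∧
      ‖fderiv ℝ u x‖ = α * ((x 0) ^ 2 + (x 1) ^ 2) ^ ((α - 1) / 2) ∧
      ‖fderiv ℝ u x‖ = α * ‖x‖ ^ (α - 1) := by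
  have hαpos : 0 < α := by
    rw [hα]
    apply div_pos (by positivity)
    have h1 : 0 < arctan ε := by
      have := Real.arctan_strictMono hε0
      rwa [Real.arctan_zero] at this
    linarith [Real.pi_pos]
  subst hΩ hu
  intro x hx
  obtain ⟨-, hx2⟩ := hx
  set w : ℂ := -Complex.I * ((x 0 : ℂ) + (x 1 : ℂ) * Complex.I) with hw
  have hwre : w.re = x 1 := by simp [hw]
  have hwim : w.im = -(x 0) := by simp [hw]
  have hslit : w ∈ Complex.slitPlane := by
    rw [Complex.mem_slitPlane_iff]
    rcases eq_or_ne (x 0) 0 with h | h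
    · left; rw [hwre]; rw [h] at hx2; simpa using hx2
    · right; rw [hwim]; simpa using h
  have hw0 : w ≠ 0 := Complex.slitPlane_ne_zero hslit
  set c : ℂ := (α : ℂ) * w ^ ((α : ℂ) - 1) with hc
  have hc0 : c ≠ 0 := by
    apply mul_ne_zero
    · exact_mod_cast hαpos.ne'
    · rw [Complex.cpow_def_of_ne_zero hw0]; exact Complex.exp_ne_zero _
  have habs_c : ‖c‖ = α * ‖w‖ ^ (α - 1) := by
    rw [hc, norm_mul, Complex.norm_real, Real.norm_eq_abs, abs_of_pos hαpos]
    congr 1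
    rw [show ((α : ℂ) - 1) = ((α - 1 : ℝ) : ℂ) by push_cast; ring,
      Complex.norm_cpow_of_ne_zero hw0]
    simp
  have hwabs : ‖w‖ = ‖x‖ := by
    rw [hw, ← Lmap_apply, norm_Lmap]
  -- derivative setup
  set D : EuclideanSpace ℝ (Fin 2) →L[ℝ] ℝ :=
    Complex.reCLM.comp ((((1 : ℂ →L[ℂ] ℂ).smulRight c).restrictScalars ℝ).comp Lmap) with hD
  have hLd : HasFDerivAt
      (fun v : EuclideanSpace ℝ (Fin 2) => -Complex.I * ((v 0 : ℂ) + (v 1 : ℂ) * Complex.I))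
      Lmap x := by
    have h : (fun v : EuclideanSpace ℝ (Fin 2) =>
        -Complex.I * ((v 0 : ℂ) + (v 1 : ℂ) * Complex.I)) = fun v => Lmap v :=
      funext fun v => (Lmap_apply v).symm
    rw [h]
    exact Lmap.hasFDerivAt
  have hcpow : HasFDerivAt (fun z : ℂ => z ^ (α : ℂ))
      (((1 : ℂ →L[ℂ] ℂ).smulRight c).restrictScalars ℝ) w :=
    ((Complex.hasStrictDerivAt_cpow_const hslit).hasDerivAt).hasFDerivAt.restrictScalars ℝ
  have huD : HasFDerivAt (fun v : EuclideanSpace ℝ (Fin 2) =>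
      ((-Complex.I * ((v 0 : ℂ) + (v 1 : ℂ) * Complex.I)) ^ (α : ℂ)).re) D x :=
    by have h := hcpow.comp x hLd; exact Complex.reCLM.hasFDerivAt.comp x h
  have hDapp : ∀ v, D v = (Lmap v * c).re := by
    intro v; simp [hD, smul_eq_mul]
  have hDnorm : ‖D‖ = ‖c‖ := by
    apply le_antisymm
    · apply ContinuousLinearMap.opNorm_le_bound _ (norm_nonneg c)
      intro v
      rw [hDapp]
      calc |(Lmap v * c).re| ≤ ‖Lmap v * c‖ := Complex.abs_re_le_norm _
        _ = ‖Lmap v‖ * ‖c‖ := by rw [norm_mul]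
        _ = ‖c‖ * ‖v‖ := by rw [norm_Lmap, mul_comm]
    · set c' : ℂ := (starRingEnd ℂ) c / (‖c‖ : ℂ) with hc'
      set v : EuclideanSpace ℝ (Fin 2) :=
        (WithLp.equiv 2 (Fin 2 → ℝ)).symm ![-(c'.im), c'.re] with hv
      have hv0 : v 0 = -(c'.im) := rfl
      have hv1 : v 1 = c'.re := rfl
      have hLv : Lmap v = c' := by
        rw [Lmap_apply, hv0, hv1]
        apply Complex.ext <;> simp
      have habsc' : ‖c'‖ = 1 := by
        rw [hc', norm_div, Complex.norm_conj, Complex.norm_real, Real.norm_eq_abs,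
          abs_of_nonneg (norm_nonneg c), div_self (norm_ne_zero_iff.mpr hc0)]
      have hnv : ‖v‖ = 1 := by rw [← norm_Lmap, hLv, habsc']
      have hDv : D v = ‖c‖ := by
        rw [hDapp, hLv, hc', div_mul_eq_mul_div, ← Complex.normSq_eq_conj_mul_self]
        rw [Complex.normSq_eq_norm_sq]
        rw [← Complex.ofReal_div, Complex.ofReal_re, sq, mul_div_assoc,
          div_self (norm_ne_zero_iff.mpr hc0), mul_one]
      calc ‖c‖ = |D v| := by rw [hDv, abs_of_nonneg (norm_nonneg c)]
        _ ≤ ‖D‖ * ‖v‖ := D.le_opNorm v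
        _ = ‖D‖ := by rw [hnv, mul_one]
  have key : ‖fderiv ℝ (fun v : EuclideanSpace ℝ (Fin 2) =>
      ((-Complex.I * ((v 0 : ℂ) + (v 1 : ℂ) * Complex.I)) ^ (α : ℂ)).re) x‖
      = α * ‖x‖ ^ (α - 1) := by
    rw [huD.fderiv, hDnorm, habs_c, hwabs]
  refine ⟨huD.differentiableAt, ?_, key⟩
  rw [key]
  congr 1
  have hs : (0 : ℝ) ≤ x 0 ^ 2 + x 1 ^ 2 := by positivity
  have hns : ‖x‖ = (x 0 ^ 2 + x 1 ^ 2) ^ (1 / 2 : ℝ) := by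
    rw [EuclideanSpace.norm_eq, ← Real.sqrt_eq_rpow]
    simp [Fin.sum_univ_two, sq_abs]
  rw [hns, ← Real.rpow_mul hs]
  ring_nf
end
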